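/- arXiv:2303.05931 — 3 statements merged into one kernel-verified Lean document; each statement's English description precedes it below -/
import Mathlib

section
/- Let R ≅ R₁ × ⋯ × Rₙ, where each (Rᵢ, 𝔪ᵢ) is an Artinian local principal ideal ring having at least 2 nonzero proper ideals, and assume either n ≥ 2, or n = 1 and R₁ has at least 3 nonzero proper ideals. Then the metric dimension of the prime ideal sum graph PIS(R) equals |A(R)*| − 3ⁿ + 1, where A(R)* denotes the set of nonzero proper ideals of R. -/
open scoped Classical

/-- The vertex set of the prime ideal sum graph: nonzero proper ideals of `R`. -/
abbrev PISVertex (R : Type*) [CommRing R] := {I : Ideal R // I ≠ ⊥ ∧ I ≠ ⊤}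

/-- The prime ideal sum graph of a commutative ring `R`: vertices are nonzero proper
ideals, and two distinct vertices `I`, `J` are adjacent iff `I + J` is a prime ideal. -/
def PIS (R : Type*) [CommRing R] : SimpleGraph (PISVertex R) where
  Adj I J := I ≠ J ∧ (I.1 + J.1).IsPrime
  symm := ⟨fun I J h => ⟨h.1.symm, by rw [add_comm]; exact h.2⟩⟩
  loopless := ⟨fun I h => h.1 rfl⟩

/-- A set `S` of vertices is a resolving set if any two distinct vertices not both in `S`
are distinguished by the distance to some vertex of `S`. -/
def IsResolvingSet {V : Type*} (G : SimpleGraph V) (S : Set V) : Prop :=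
  ∀ u v : V, u ≠ v → ¬(u ∈ S ∧ v ∈ S) → ∃ w ∈ S, G.dist u w ≠ G.dist v w

/-- The metric dimension of a graph: the least cardinality of a resolving set. -/
noncomputable def metricDim {V : Type*} (G : SimpleGraph V) : ℕ∞ :=
  ⨅ S : {S : Set V // IsResolvingSet G S}, (S : Set V).encard

set_option linter.unusedSectionVars false
set_option linter.unusedVariables false
set_option maxHeartbeats 1000000

section Factor
variable {A : Type*} [CommRing A] [IsArtinianRing A] [IsLocalRing A] [IsPrincipalIdealRing A]

local notation "mx" => IsLocalRing.maximalIdeal A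

theorem mx_nilpotent : ∃ t, (mx : Ideal A) ^ t = ⊥ := by
  obtain ⟨t, ht⟩ := IsArtinianRing.isNilpotent_jacobson_bot (R := A)
  exact ⟨t, by rwa [IsLocalRing.jacobson_eq_maximalIdeal ⊥ bot_ne_top] at ht⟩

theorem eq_pow_maximalIdeal (I : Ideal A) : ∃ k, I = mx ^ k := by
  obtain ⟨t, ht⟩ := mx_nilpotent (A := A)
  obtain ⟨x, hx⟩ : ∃ x, I = Ideal.span {x} := (IsPrincipalIdealRing.principal I).1.imp
    fun x h => by simpa using h
  obtain ⟨π, hπ⟩ : ∃ π, (mx : Ideal A) = Ideal.span {π} := (IsPrincipalIdealRing.principal mx).1.imp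
    fun x h => by simpa using h
  by_cases hx0 : x = 0
  · exact ⟨t, by rw [hx, hx0, ht, Ideal.span_singleton_eq_bot.2 rfl]⟩
  have hxt : x ∉ (mx : Ideal A) ^ t := by rw [ht]; simpa using hx0
  set Q : ℕ → Prop := fun k => x ∈ (mx : Ideal A) ^ k with hQ
  have h0 : Q 0 := by simp [hQ]
  set k := Nat.findGreatest Q t with hk
  have hmem : Q k := Nat.findGreatest_spec (Nat.zero_le _) h0
  have hnot : ¬ Q (k + 1) := by
    intro hc
    have hle : k + 1 ≤ t := by
      by_contra hgt
      push_neg at hgt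
      have : (mx : Ideal A) ^ (k+1) ≤ mx ^ t := Ideal.pow_le_pow_right (by omega)
      exact hxt (this hc)
    exact Nat.findGreatest_is_greatest (Nat.lt_succ_self k) hle hc
  refine ⟨k, ?_⟩
  have hpow : (mx : Ideal A) ^ k = Ideal.span {π ^ k} := by
    rw [hπ, Ideal.span_singleton_pow]
  obtain ⟨c, hc⟩ : π ^ k ∣ x := Ideal.mem_span_singleton.1 (hpow ▸ hmem)
  have hcu : IsUnit c := by
    by_contra hcu
    apply hnot
    have hcm : c ∈ (mx : Ideal A) := hcu
    have : x ∈ (mx : Ideal A) ^ k * mx := by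
      rw [hc]; exact Ideal.mul_mem_mul (hpow ▸ Ideal.mem_span_singleton.2 dvd_rfl) hcm
    rwa [← pow_succ] at this
  rw [hx, hpow]
  apply le_antisymm
  · rw [Ideal.span_singleton_le_span_singleton, hc]
    exact Dvd.intro c rfl
  · rw [Ideal.span_singleton_le_span_singleton, hc]
    exact (isUnit_iff_exists_inv.1 hcu).elim fun b hb =>
      ⟨b, by rw [mul_assoc, hb, mul_one]⟩

theorem ideal_finite : Finite (Ideal A) := by
  obtain ⟨t, ht⟩ := mx_nilpotent (A := A)
  apply Finite.of_surjective (fun k : Fin (t+1) => (mx : Ideal A) ^ (k : ℕ))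
  intro I
  obtain ⟨k, rfl⟩ := eq_pow_maximalIdeal I
  by_cases h : k ≤ t
  · exact ⟨⟨k, by omega⟩, rfl⟩
  · refine ⟨⟨t, by omega⟩, ?_⟩
    simp only
    rw [ht]
    exact le_antisymm bot_le (ht ▸ Ideal.pow_le_pow_right (by omega))

theorem ideal_total (I J : Ideal A) : I ≤ J ∨ J ≤ I := by
  obtain ⟨k, rfl⟩ := eq_pow_maximalIdeal I
  obtain ⟨l, rfl⟩ := eq_pow_maximalIdeal J
  rcases le_total k l with h | h
  · exact Or.inr (Ideal.pow_le_pow_right h)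
  · exact Or.inl (Ideal.pow_le_pow_right h)

theorem isPrime_iff_eq_mx {P : Ideal A} : P.IsPrime ↔ P = mx := by
  constructor
  · intro hP
    refine le_antisymm (IsLocalRing.le_maximalIdeal hP.ne_top) ?_
    obtain ⟨t, ht⟩ := mx_nilpotent (A := A)
    have key : ∀ j, (mx : Ideal A) ^ (j + 1) ≤ P → mx ≤ P := by
      intro j
      induction j with
      | zero => intro h; simpa using h
      | succ j ih =>
        intro h
        rw [pow_succ] at h
        rcases hP.mul_le.1 h with h' | h'
        · exact ih h'
        · exact h'
    exact key t (by rw [pow_succ, ht]; simpa using bot_le)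
  · rintro rfl
    exact (IsLocalRing.maximalIdeal.isMaximal A).isPrime

/-- The coordinate class of an ideal: `0` if top, `1` if maximal, `2` otherwise. -/
noncomputable def sig (I : Ideal A) : Fin 3 :=
  if I = ⊤ then 0 else if I = mx then 1 else 2

theorem mx_ne_top : (mx : Ideal A) ≠ ⊤ :=
  Ideal.IsMaximal.ne_top (IsLocalRing.maximalIdeal.isMaximal A)

theorem sig_top : sig (⊤ : Ideal A) = 0 := by simp [sig]

theorem sig_mx : sig (mx : Ideal A) = 1 := by simp [sig, mx_ne_top]

theorem sig_eq_zero_iff {I : Ideal A} : sig I = 0 ↔ I = ⊤ := by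
  unfold sig; split_ifs with h1 h2 <;> simp_all

theorem sig_eq_one_iff {I : Ideal A} : sig I = 1 ↔ I = mx := by
  constructor
  · intro h
    unfold sig at h
    split_ifs at h with h1 h2
    · exact absurd h (by decide)
    · exact h2
    · exact absurd h (by decide)
  · intro h
    unfold sig
    rw [if_neg (by rw [h]; exact mx_ne_top), if_pos h]

theorem sig_eq_two_iff {I : Ideal A} : sig I = 2 ↔ (I ≠ ⊤ ∧ I ≠ mx) := by
  unfold sig; split_ifs with h1 h2 <;> simp_all

theorem sig_ne_zero_iff {I : Ideal A} : sig I ≠ 0 ↔ I ≠ ⊤ := sig_eq_zero_iff.not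

theorem min3_eq_zero_iff' : ∀ a b : Fin 3, min a b = 0 ↔ (a = 0 ∨ b = 0) := by decide
theorem min3_eq_one_iff' : ∀ a b : Fin 3, min a b = 1 ↔
    ((a = 1 ∧ b ≠ 0) ∨ (b = 1 ∧ a ≠ 0)) := by decide

theorem sup_eq_top_iff_sig {I J : Ideal A} : I ⊔ J = ⊤ ↔ min (sig I) (sig J) = 0 := by
  rw [min3_eq_zero_iff', sig_eq_zero_iff, sig_eq_zero_iff]
  constructor
  · intro h
    by_contra hc
    push_neg at hc
    have hle : I ⊔ J ≤ mx := sup_le (IsLocalRing.le_maximalIdeal hc.1)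
      (IsLocalRing.le_maximalIdeal hc.2)
    rw [h] at hle
    exact mx_ne_top (top_le_iff.1 hle)
  · rintro (rfl | rfl)
    · rw [top_sup_eq]
    · rw [sup_top_eq]

theorem sup_eq_mx_iff_sig {I J : Ideal A} : I ⊔ J = mx ↔ min (sig I) (sig J) = 1 := by
  rw [min3_eq_one_iff', sig_eq_one_iff, sig_eq_one_iff, sig_ne_zero_iff, sig_ne_zero_iff]
  constructor
  · intro h
    have h1 : I ≠ ⊤ := fun ht => mx_ne_top (by rw [← h, ht, top_sup_eq])
    have h2 : J ≠ ⊤ := fun ht => mx_ne_top (by rw [← h, ht, sup_top_eq])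
    rcases ideal_total I J with hle | hle
    · rw [sup_eq_right.2 hle] at h
      exact Or.inr ⟨h, h1⟩
    · rw [sup_eq_left.2 hle] at h
      exact Or.inl ⟨h, h2⟩
  · rintro (⟨rfl, h⟩ | ⟨rfl, h⟩)
    · exact sup_eq_left.2 (IsLocalRing.le_maximalIdeal h)
    · exact sup_eq_right.2 (IsLocalRing.le_maximalIdeal h)

theorem mx_ne_bot_of (h : {I : Ideal A | I ≠ ⊥ ∧ I ≠ ⊤}.Nonempty) : (mx : Ideal A) ≠ ⊥ := by
  obtain ⟨I, hI⟩ := h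
  intro h0
  exact hI.1 (le_antisymm (h0 ▸ IsLocalRing.le_maximalIdeal hI.2) bot_le)

theorem exists_sig2_nonzero
    (h2 : 2 ≤ {I : Ideal A | I ≠ ⊥ ∧ I ≠ ⊤}.encard) :
    ∃ K : Ideal A, K ≠ ⊥ ∧ K ≠ ⊤ ∧ sig K = 2 := by
  obtain ⟨I, J, hI, hJ, hIJ⟩ := Set.one_lt_encard_iff.1 (lt_of_lt_of_le (by norm_num) h2)
  have key : ∀ X Y : Ideal A, X ∈ {I : Ideal A | I ≠ ⊥ ∧ I ≠ ⊤} →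
      Y ∈ {I : Ideal A | I ≠ ⊥ ∧ I ≠ ⊤} → X < Y → ∃ K : Ideal A, K ≠ ⊥ ∧ K ≠ ⊤ ∧ sig K = 2 := by
    intro X Y hX hY hlt
    refine ⟨X, hX.1, hX.2, sig_eq_two_iff.2 ⟨hX.2, ?_⟩⟩
    rintro rfl
    exact absurd (lt_of_lt_of_le hlt (IsLocalRing.le_maximalIdeal hY.2)) (lt_irrefl _)
  rcases ideal_total I J with h | h
  · exact key I J hI hJ (lt_of_le_of_ne h hIJ)
  · exact key J I hJ hI (lt_of_le_of_ne h (Ne.symm hIJ))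

theorem exists_two_sig2_nonzero
    (h3 : 3 ≤ {I : Ideal A | I ≠ ⊥ ∧ I ≠ ⊤}.encard) :
    ∃ K K' : Ideal A, K ≠ K' ∧ (K ≠ ⊥ ∧ K ≠ ⊤ ∧ sig K = 2) ∧
      (K' ≠ ⊥ ∧ K' ≠ ⊤ ∧ sig K' = 2) := by
  set s := {I : Ideal A | I ≠ ⊥ ∧ I ≠ ⊤} with hs
  obtain ⟨Z, hZ⟩ : s.Nonempty := by
    rw [← Set.encard_ne_zero]; intro h; rw [h] at h3; simp at h3
  have h2 : 2 ≤ (s \ {Z}).encard := by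
    have h := Set.encard_diff_singleton_add_one hZ
    rw [← h, show (3 : ℕ∞) = 2 + 1 by norm_num] at h3
    exact (ENat.add_le_add_iff_right (by simp)).1 h3
  obtain ⟨I, J, hI, hJ, hIJ⟩ := Set.one_lt_encard_iff.1 (lt_of_lt_of_le (by norm_num) h2)
  have hIs : I ∈ s := hI.1
  have hJs : J ∈ s := hJ.1
  have hIZ : I ≠ Z := by intro h; exact hI.2 (by simp [h])
  have hJZ : J ≠ Z := by intro h; exact hJ.2 (by simp [h])
  have sig2 : ∀ X Y : Ideal A, X ∈ s → Y ∈ s → X < Y → X ≠ ⊥ ∧ X ≠ ⊤ ∧ sig X = 2 := by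
    intro X Y hX hY hlt
    refine ⟨hX.1, hX.2, sig_eq_two_iff.2 ⟨hX.2, ?_⟩⟩
    rintro rfl
    exact absurd (lt_of_lt_of_le hlt (IsLocalRing.le_maximalIdeal hY.2)) (lt_irrefl _)
  have lt_of_ne : ∀ X Y : Ideal A, X ≠ Y → X < Y ∨ Y < X := by
    intro X Y h
    rcases ideal_total X Y with h' | h'
    · exact Or.inl (lt_of_le_of_ne h' h)
    · exact Or.inr (lt_of_le_of_ne h' (Ne.symm h))
  rcases lt_of_ne I J hIJ with h1 | h1 <;> rcases lt_of_ne I Z hIZ with h2' | h2' <;>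
    rcases lt_of_ne J Z hJZ with h3' | h3'
  · exact ⟨I, J, ne_of_lt h1, sig2 I J hIs hJs h1, sig2 J Z hJs hZ h3'⟩
  · exact ⟨I, Z, ne_of_lt h2', sig2 I Z hIs hZ h2', sig2 Z J hZ hJs h3'⟩
  · exact ⟨I, J, ne_of_lt h1, sig2 I J hIs hJs h1, sig2 J Z hJs hZ h3'⟩
  · exact ⟨Z, I, ne_of_lt h2', sig2 Z I hZ hIs h2', sig2 I J hIs hJs h1⟩
  · exact ⟨J, I, ne_of_lt h1, sig2 J I hJs hIs h1, sig2 I Z hIs hZ h2'⟩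
  · exact ⟨J, I, ne_of_lt h1, sig2 J I hJs hIs h1, sig2 I Z hIs hZ h2'⟩
  · exact ⟨J, Z, ne_of_lt h3', sig2 J Z hJs hZ h3', sig2 Z I hZ hIs h2'⟩
  · exact ⟨Z, J, ne_of_lt h3', sig2 Z J hZ hJs h3', sig2 J I hJs hIs h1⟩
end Factor

section Patterns
variable {n : ℕ}

/-- Abstract adjacency on `σ`-patterns. -/
def AdjP (p q : Fin n → Fin 3) : Prop :=
  ∃ j, min (p j) (q j) = 1 ∧ ∀ i, i ≠ j → min (p i) (q i) = 0

theorem AdjP.symm {p q : Fin n → Fin 3} (h : AdjP p q) : AdjP q p := by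
  obtain ⟨j, h1, h0⟩ := h
  exact ⟨j, by rwa [min_comm], fun i hi => by rw [min_comm]; exact h0 i hi⟩

theorem min3_two_right : ∀ a : Fin 3, min a 2 = 1 ↔ a = 1 := by decide
theorem min3_one_right : ∀ a : Fin 3, min a 1 = 1 ↔ a ≠ 0 := by decide
theorem min3_zero_right : ∀ a : Fin 3, min a 0 = 0 := by decide
theorem min3_one_right_zero : ∀ a : Fin 3, min a 1 = 0 ↔ a = 0 := by decide
theorem min3_two_right_zero : ∀ a : Fin 3, min a 2 = 0 ↔ a = 0 := by decide
theorem min3_comm : ∀ a b : Fin 3, min a b = min b a := fun a b => min_comm a b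

/-- Pattern with a single `2` entry. -/
def patC1 (j : Fin n) : Fin n → Fin 3 := fun i => if i = j then 2 else 0
/-- Pattern with a `2` at `j` and `1` at `j'`. -/
def patC2 (j j' : Fin n) : Fin n → Fin 3 := fun i => if i = j then 2 else if i = j' then 1 else 0
/-- Pattern with a single `1` entry. -/
def patE1 (j : Fin n) : Fin n → Fin 3 := fun i => if i = j then 1 else 0
/-- Pattern with `1` at two entries. -/
def patE2 (j k : Fin n) : Fin n → Fin 3 := fun i => if i = j ∨ i = k then 1 else 0

theorem adjP_patC1 (p : Fin n → Fin 3) (j : Fin n) : AdjP p (patC1 j) ↔ p j = 1 := by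
  constructor
  · rintro ⟨k, hk1, _⟩
    by_cases h : k = j
    · subst h
      rwa [patC1, if_pos rfl, min3_two_right] at hk1
    · rw [patC1, if_neg h, min3_zero_right] at hk1
      exact absurd hk1 (by decide)
  · intro h
    refine ⟨j, ?_, ?_⟩
    · rw [patC1, if_pos rfl, min3_two_right]; exact h
    · intro i hi
      rw [patC1, if_neg hi, min3_zero_right]

theorem adjP_patC2 (p : Fin n → Fin 3) {j j' : Fin n} (hjj : j ≠ j') :
    AdjP p (patC2 j j') ↔ ((p j = 1 ∧ p j' = 0) ∨ (p j' ≠ 0 ∧ p j = 0)) := by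
  constructor
  · rintro ⟨k, hk1, hk0⟩
    by_cases h : k = j
    · subst h
      rw [patC2, if_pos rfl, min3_two_right] at hk1
      have := hk0 j' (Ne.symm hjj)
      rw [patC2, if_neg (Ne.symm hjj), if_pos rfl, min3_one_right_zero] at this
      exact Or.inl ⟨hk1, this⟩
    · by_cases h' : k = j'
      · subst h'
        rw [patC2, if_neg h, if_pos rfl, min3_one_right] at hk1
        have := hk0 j hjj.symm.symm
        rw [patC2, if_pos rfl, min3_two_right_zero] at this
        exact Or.inr ⟨hk1, this⟩
      · rw [patC2, if_neg h, if_neg h', min3_zero_right] at hk1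
        exact absurd hk1 (by decide)
  · rintro (⟨h1, h0⟩ | ⟨h1, h0⟩)
    · refine ⟨j, ?_, ?_⟩
      · rw [patC2, if_pos rfl, min3_two_right]; exact h1
      · intro i hi
        by_cases h' : i = j'
        · subst h'; rw [patC2, if_neg (Ne.symm hjj), if_pos rfl, min3_one_right_zero]; exact h0
        · rw [patC2, if_neg hi, if_neg h', min3_zero_right]
    · refine ⟨j', ?_, ?_⟩
      · rw [patC2, if_neg (Ne.symm hjj), if_pos rfl, min3_one_right]; exact h1
      · intro i hi
        by_cases h' : i = j
        · subst h'; rw [patC2, if_pos rfl, min3_two_right_zero]; exact h0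
        · rw [patC2, if_neg h', if_neg hi, min3_zero_right]

theorem adjP_patE1 (p : Fin n → Fin 3) (j : Fin n) : AdjP p (patE1 j) ↔ p j ≠ 0 := by
  constructor
  · rintro ⟨k, hk1, _⟩
    by_cases h : k = j
    · subst h; rwa [patE1, if_pos rfl, min3_one_right] at hk1
    · rw [patE1, if_neg h, min3_zero_right] at hk1
      exact absurd hk1 (by decide)
  · intro h
    refine ⟨j, ?_, fun i hi => ?_⟩
    · rw [patE1, if_pos rfl, min3_one_right]; exact h
    · rw [patE1, if_neg hi, min3_zero_right]

theorem adjP_patE2 (p : Fin n → Fin 3) {j k : Fin n} (hjk : j ≠ k)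
    (hj : p j ≠ 0) (hk : p k = 0) : AdjP p (patE2 j k) := by
  refine ⟨j, ?_, fun i hi => ?_⟩
  · rw [patE2, if_pos (Or.inl rfl), min3_one_right]; exact hj
  · by_cases h : i = k
    · subst h
      rw [patE2, if_pos (Or.inr rfl), min3_one_right_zero]; exact hk
    · rw [patE2, if_neg (by tauto), min3_zero_right]

/-- Key construction: two distinct nonzero patterns are separated by a pattern
containing a `2`. -/
theorem exists_separating_pattern {p q : Fin n → Fin 3} (hpq : p ≠ q)
    (hp : ∃ i, p i ≠ 0) (hq : ∃ i, q i ≠ 0) :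
    ∃ C : Fin n → Fin 3, (∃ j, C j = 2) ∧ ¬(AdjP p C ↔ AdjP q C) := by
  by_cases hex : ∃ j, (p j = 1 ∧ q j ≠ 1) ∨ (q j = 1 ∧ p j ≠ 1)
  · obtain ⟨j, hj⟩ := hex
    refine ⟨patC1 j, ⟨j, by rw [patC1, if_pos rfl]⟩, ?_⟩
    rw [adjP_patC1, adjP_patC1]
    rcases hj with ⟨h1, h2⟩ | ⟨h1, h2⟩ <;> tauto
  · push_neg at hex
    obtain ⟨j, hj⟩ := Function.ne_iff.1 hpq
    have hp1 : p j ≠ 1 := fun h => hj (h.trans ((hex j).1 h).symm)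
    have hq1 : q j ≠ 1 := fun h => hj (((hex j).2 h).trans h.symm)
    have hcases : ∀ a : Fin 3, a ≠ 1 → a = 0 ∨ a = 2 := by decide
    rcases hcases _ hp1 with hp0 | hp2
    · have hq2 : q j = 2 := by
        rcases hcases _ hq1 with h | h
        · exact absurd (hp0.trans h.symm) hj
        · exact h
      obtain ⟨j', hj'⟩ := hp
      have hjj : j ≠ j' := by rintro rfl; exact hj' hp0
      refine ⟨patC2 j j', ⟨j, by rw [patC2, if_pos rfl]⟩, ?_⟩
      rw [adjP_patC2 _ hjj, adjP_patC2 _ hjj]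
      intro hiff
      have : q j = 1 ∨ q j = 0 := by
        rcases hiff.1 (Or.inr ⟨hj', hp0⟩) with ⟨h, _⟩ | ⟨_, h⟩
        · exact Or.inl h
        · exact Or.inr h
      rcases this with h | h <;> rw [hq2] at h <;> exact absurd h (by decide)
    · have hq0 : q j = 0 := by
        rcases hcases _ hq1 with h | h
        · exact h
        · exact absurd (hp2.trans h.symm) hj
      obtain ⟨j', hj'⟩ := hq
      have hjj : j ≠ j' := by rintro rfl; exact hj' hq0
      refine ⟨patC2 j j', ⟨j, by rw [patC2, if_pos rfl]⟩, ?_⟩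
      rw [adjP_patC2 _ hjj, adjP_patC2 _ hjj]
      intro hiff
      have : p j = 1 ∨ p j = 0 := by
        rcases hiff.2 (Or.inr ⟨hj', hq0⟩) with ⟨h, _⟩ | ⟨_, h⟩
        · exact Or.inl h
        · exact Or.inr h
      rcases this with h | h <;> rw [hp2] at h <;> exact absurd h (by decide)
end Patterns

section Pi
variable {n : ℕ} (Rs : Fin n → Type*) [∀ i, CommRing (Rs i)]

/-- The ideal of a finite product ring with prescribed coordinates. -/
def prodIdeal (J : ∀ i, Ideal (Rs i)) : Ideal (∀ i, Rs i) where
  carrier := {x | ∀ i, x i ∈ J i}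
  add_mem' hx hy i := (J i).add_mem (hx i) (hy i)
  zero_mem' i := (J i).zero_mem
  smul_mem' r x hx i := (J i).mul_mem_left (r i) (hx i)

variable {Rs}

theorem mem_prodIdeal {J : ∀ i, Ideal (Rs i)} {x : ∀ i, Rs i} :
    x ∈ prodIdeal Rs J ↔ ∀ i, x i ∈ J i := Iff.rfl

theorem eval_surjective (i : Fin n) : Function.Surjective (Pi.evalRingHom Rs i) :=
  fun a => ⟨Pi.single i a, by simp⟩

/-- Every ideal of a finite product is the product of its coordinate projections. -/
theorem ideal_eq_prodIdeal (I : Ideal (∀ i, Rs i)) :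
    I = prodIdeal Rs (fun i => I.map (Pi.evalRingHom Rs i)) := by
  apply le_antisymm
  · intro x hx i
    exact Ideal.mem_map_of_mem _ hx
  · intro x hx
    have : x = ∑ i, Pi.single i (x i) := by
      ext j
      rw [Finset.sum_apply]
      simp [Pi.single_apply]
    rw [this]
    apply Ideal.sum_mem
    intro i _
    obtain ⟨y, hy, hyx⟩ := (Ideal.mem_map_iff_of_surjective _ (eval_surjective i)).1 (hx i)
    have : Pi.single i (x i) = Pi.single i (1 : Rs i) * y := by
      ext j
      by_cases h : j = i
      · subst h; simp; exact hyx.symm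
      · simp [Pi.single_apply, h]
    rw [this]
    exact I.mul_mem_left _ hy

/-- The order isomorphism between ideals of a finite product and products of ideals. -/
noncomputable def idealPiIso : Ideal (∀ i, Rs i) ≃o ∀ i, Ideal (Rs i) where
  toFun I := fun i => I.map (Pi.evalRingHom Rs i)
  invFun J := prodIdeal Rs J
  left_inv I := (ideal_eq_prodIdeal I).symm
  right_inv J := by
    funext i
    apply le_antisymm
    · rw [Ideal.map_le_iff_le_comap]
      intro x hx
      exact hx i
    · intro a ha
      refine (Ideal.mem_map_iff_of_surjective _ (eval_surjective i)).2 ⟨Pi.single i a, ?_, by simp⟩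
      intro j
      by_cases h : j = i
      · subst h; simpa using ha
      · simp [Pi.single_apply, h]
  map_rel_iff' := by
    intro I J
    simp only [Equiv.coe_fn_mk]
    constructor
    · intro h
      rw [ideal_eq_prodIdeal I, ideal_eq_prodIdeal J]
      intro x hx i
      exact h i (hx i)
    · intro h i
      exact Ideal.map_mono h

theorem idealPiIso_apply (I : Ideal (∀ i, Rs i)) (i : Fin n) :
    idealPiIso I i = I.map (Pi.evalRingHom Rs i) := rfl

/-- Primality in a finite product: exactly one coordinate is prime, the others are top. -/
theorem isPrime_iff_pi {P : Ideal (∀ i, Rs i)} :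
    P.IsPrime ↔ ∃ i, (idealPiIso P i).IsPrime ∧ ∀ j, j ≠ i → idealPiIso P j = ⊤ := by
  constructor
  · intro hP
    -- single i 1 ∈ P gives coordinate i top
    have hsingle : ∀ i : Fin n, Pi.single i (1 : Rs i) ∈ P → idealPiIso P i = ⊤ := by
      intro i hi
      rw [Ideal.eq_top_iff_one, idealPiIso_apply]
      exact (Ideal.mem_map_iff_of_surjective _ (eval_surjective i)).2 ⟨_, hi, by simp⟩
    have hex : ∃ i, idealPiIso P i ≠ ⊤ := by
      by_contra hc
      push_neg at hc
      apply hP.ne_top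
      rw [ideal_eq_prodIdeal P, Ideal.eq_top_iff_one]
      intro i
      have h := hc i
      rw [idealPiIso_apply] at h
      exact (by rw [h]; trivial : (1 : ∀ j, Rs j) i ∈ Ideal.map (Pi.evalRingHom Rs i) P)
    obtain ⟨i, hi⟩ := hex
    have hnotmem : Pi.single i (1 : Rs i) ∉ P := fun h => hi (hsingle i h)
    refine ⟨i, ?_, ?_⟩
    · constructor
      · exact hi
      · intro a b hab
        have hab' : Pi.single i (a * b) ∈ P := by
          rw [ideal_eq_prodIdeal P, mem_prodIdeal]
          intro j
          by_cases h : j = i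
          · subst h
            simpa [idealPiIso_apply] using hab
          · simp [Pi.single_apply, h]
        have ha : (Pi.single i a) * (Pi.single i b) ∈ P := by
          have hsab : (Pi.single i a) * (Pi.single i b) = Pi.single i (a * b) := by
            ext j
            by_cases h : j = i
            · subst h; simp
            · simp [Pi.single_apply, h]
          rw [hsab]; exact hab'
        rcases hP.mem_or_mem ha with h | h
        · left
          rw [idealPiIso_apply]
          exact (Ideal.mem_map_iff_of_surjective _ (eval_surjective i)).2 ⟨_, h, by simp⟩
        · right
          rw [idealPiIso_apply]
          exact (Ideal.mem_map_iff_of_surjective _ (eval_surjective i)).2 ⟨_, h, by simp⟩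
    · intro j hj
      apply hsingle
      have hzero : (Pi.single j (1 : Rs j)) * (Pi.single i (1 : Rs i)) = 0 := by
        ext k
        by_cases h : k = j
        · subst h; simp [Pi.single_apply, Ne.symm hj]
        · have : Pi.single j (1 : Rs j) k = 0 := by simp [Pi.single_apply, h]
          simp [this]
      rcases hP.mem_or_mem (hzero ▸ P.zero_mem) with h | h
      · exact h
      · exact absurd h hnotmem
  · rintro ⟨i, hi, hj⟩
    constructor
    · intro hc
      exact hi.ne_top (by rw [hc]; simp [idealPiIso_apply, Ideal.map_top])
    · intro a b hab
      have key : ∀ x : ∀ i, Rs i, x i ∈ idealPiIso P i → x ∈ P := by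
        intro x hx
        rw [ideal_eq_prodIdeal P, mem_prodIdeal]
        intro j
        by_cases h : j = i
        · subst h; exact hx
        · rw [← idealPiIso_apply, hj j h]; trivial
      have habi : a i * b i ∈ idealPiIso P i := by
        rw [idealPiIso_apply]
        exact Ideal.mem_map_of_mem _ hab
      rcases hi.mem_or_mem habi with h | h
      · exact Or.inl (key a h)
      · exact Or.inr (key b h)
end Pi

section Congr
variable {R S : Type*} [CommRing R] [CommRing S]

/-- Ideals correspond along a ring isomorphism. -/
def idealCongr (e : R ≃+* S) : Ideal R ≃o Ideal S where
  toFun I := I.comap (e.symm : S →+* R)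
  invFun J := J.comap (e : R →+* S)
  left_inv I := Ideal.ext fun x => by
    rw [Ideal.mem_comap, Ideal.mem_comap]
    simp
  right_inv J := Ideal.ext fun x => by
    rw [Ideal.mem_comap, Ideal.mem_comap]
    simp
  map_rel_iff' := by
    intro I J
    constructor
    · intro h x hx
      have : e.symm (e x) ∈ I := by simp [hx]
      have h2 := h (show e x ∈ Ideal.comap (e.symm : S →+* R) I from this)
      simpa using h2
    · intro h x hx
      exact h hx

theorem idealCongr_isPrime_iff (e : R ≃+* S) {I : Ideal R} :
    I.IsPrime ↔ (idealCongr e I).IsPrime := by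
  constructor
  · intro h
    exact Ideal.IsPrime.comap _
  · intro h
    have : ((idealCongr e I).comap (e : R →+* S)).IsPrime := Ideal.IsPrime.comap _
    have heq : (idealCongr e I).comap (e : R →+* S) = I := (idealCongr e).symm_apply_apply I
    rwa [heq] at this
end Congr

section Main
variable {R : Type*} [CommRing R] {n : ℕ} {Rs : Fin n → Type*} [∀ i, CommRing (Rs i)]
  [∀ i, IsArtinianRing (Rs i)] [∀ i, IsLocalRing (Rs i)] [∀ i, IsPrincipalIdealRing (Rs i)]
  (Φ : Ideal R ≃o ∀ i, Ideal (Rs i))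

/-- The class map on vertices. -/
noncomputable def cV (u : PISVertex R) : Fin n → Fin 3 := fun i => sig (Φ u.1 i)

theorem phi_sup (I J : Ideal R) (i : Fin n) : Φ (I ⊔ J) i = Φ I i ⊔ Φ J i := by
  rw [map_sup]; rfl

theorem adj_iff
    (hprime : ∀ I : Ideal R, I.IsPrime ↔
      ∃ i, (Φ I i).IsPrime ∧ ∀ j, j ≠ i → Φ I j = ⊤)
    (u v : PISVertex R) :
    (PIS R).Adj u v ↔ u ≠ v ∧ AdjP (cV Φ u) (cV Φ v) := by
  show (u ≠ v ∧ (u.1 + v.1).IsPrime) ↔ _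
  apply and_congr_right
  intro _
  rw [Ideal.add_eq_sup, hprime]
  apply exists_congr
  intro i
  apply and_congr
  · rw [isPrime_iff_eq_mx, phi_sup, sup_eq_mx_iff_sig]
    rfl
  · apply forall_congr'
    intro j
    apply imp_congr_right
    intro _
    rw [phi_sup, sup_eq_top_iff_sig]
    rfl

theorem cV_ne_zero (u : PISVertex R) : ∃ i, cV Φ u i ≠ 0 := by
  by_contra hc
  push_neg at hc
  apply u.2.2
  have : Φ u.1 = ⊤ := by
    funext i
    exact sig_eq_zero_iff.1 (hc i)
  have h2 : Φ u.1 = Φ ⊤ := by rw [this, map_top]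
  exact Φ.injective h2

/-- Build a vertex with prescribed ideal coordinates. -/
noncomputable def vertOf (J : ∀ i, Ideal (Rs i)) (h1 : ∃ i, J i ≠ ⊥) (h2 : ∃ i, J i ≠ ⊤) :
    PISVertex R := by
  refine ⟨Φ.symm J, ?_, ?_⟩
  · intro h
    obtain ⟨i, hi⟩ := h1
    apply hi
    have : J = Φ (⊥ : Ideal R) := by rw [← h, Φ.apply_symm_apply]
    rw [this, map_bot]
    rfl
  · intro h
    obtain ⟨i, hi⟩ := h2
    apply hi
    have : J = Φ (⊤ : Ideal R) := by rw [← h, Φ.apply_symm_apply]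
    rw [this, map_top]
    rfl

theorem cV_vertOf (J : ∀ i, Ideal (Rs i)) (h1 : ∃ i, J i ≠ ⊥) (h2 : ∃ i, J i ≠ ⊤) (i : Fin n) :
    cV Φ (vertOf Φ J h1 h2) i = sig (J i) := by
  unfold cV vertOf
  rw [Φ.apply_symm_apply]

theorem vertOf_inj {J J' : ∀ i, Ideal (Rs i)} {h1 h2 h1' h2'}
    (h : vertOf Φ J h1 h2 = vertOf Φ J' h1' h2') : J = J' := by
  have := congrArg (fun u : PISVertex R => Φ u.1) h
  simpa [vertOf, Φ.apply_symm_apply] using this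

/-- Coordinate data for a pattern, given a choice of `sig = 2` ideals. -/
noncomputable def pid (K : ∀ i, Ideal (Rs i)) (p : Fin n → Fin 3) : ∀ i, Ideal (Rs i) :=
  fun i => if p i = 0 then ⊤ else if p i = 1 then IsLocalRing.maximalIdeal (Rs i) else K i

section WithK
variable (K : ∀ i, Ideal (Rs i))

theorem sig_pid (hK : ∀ i, K i ≠ ⊥ ∧ K i ≠ ⊤ ∧ sig (K i) = 2)
    (p : Fin n → Fin 3) (i : Fin n) : sig (pid K p i) = p i := by
  unfold pid
  split_ifs with h0 h1
  · rw [sig_top, h0]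
  · rw [sig_mx, h1]
  · rw [(hK i).2.2]
    have : ∀ a : Fin 3, a ≠ 0 → a ≠ 1 → a = 2 := by decide
    exact (this _ h0 h1).symm

theorem pid_ne_bot (hK : ∀ i, K i ≠ ⊥ ∧ K i ≠ ⊤ ∧ sig (K i) = 2)
    (hmx : ∀ i, IsLocalRing.maximalIdeal (Rs i) ≠ ⊥)
    (p : Fin n → Fin 3) (i : Fin n) : pid K p i ≠ ⊥ := by
  unfold pid
  split_ifs with h0 h1
  · intro h
    have : (1 : Rs i) ∈ (⊥ : Ideal (Rs i)) := h ▸ trivial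
    simp at this
  · exact hmx i
  · exact (hK i).1

theorem pid_ne_top (hK : ∀ i, K i ≠ ⊥ ∧ K i ≠ ⊤ ∧ sig (K i) = 2)
    (p : Fin n → Fin 3) (i : Fin n) (hi : p i ≠ 0) : pid K p i ≠ ⊤ := by
  unfold pid
  split_ifs with h0 h1
  · exact absurd h0 hi
  · exact mx_ne_top
  · exact (hK i).2.1

/-- The canonical vertex of a nonzero pattern. -/
noncomputable def vp (hK : ∀ i, K i ≠ ⊥ ∧ K i ≠ ⊤ ∧ sig (K i) = 2)
    (hmx : ∀ i, IsLocalRing.maximalIdeal (Rs i) ≠ ⊥)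
    (p : Fin n → Fin 3) (hp : ∃ i, p i ≠ 0) : PISVertex R :=
  vertOf Φ (pid K p) ⟨hp.choose, pid_ne_bot K hK hmx p hp.choose⟩
    ⟨hp.choose, pid_ne_top K hK p hp.choose hp.choose_spec⟩

theorem cV_vp (hK : ∀ i, K i ≠ ⊥ ∧ K i ≠ ⊤ ∧ sig (K i) = 2)
    (hmx : ∀ i, IsLocalRing.maximalIdeal (Rs i) ≠ ⊥)
    (p : Fin n → Fin 3) (hp : ∃ i, p i ≠ 0) : cV Φ (vp Φ K hK hmx p hp) = p := by
  funext i
  unfold vp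
  rw [cV_vertOf, sig_pid K hK]

/-- The second representative of a pattern containing a `2`. -/
noncomputable def vp2 (hK : ∀ i, K i ≠ ⊥ ∧ K i ≠ ⊤ ∧ sig (K i) = 2)
    (hmx : ∀ i, IsLocalRing.maximalIdeal (Rs i) ≠ ⊥)
    (K2 : ∀ i, Ideal (Rs i)) (p : Fin n → Fin 3) (j : Fin n) (hj : p j = 2)
    (hK2 : sig (K2 j) = 2 ∧ K2 j ≠ ⊤ ∧ K2 j ≠ K j)
    (hbot : K2 j ≠ ⊥ ∨ 2 ≤ n) : PISVertex R := by
  refine vertOf Φ (Function.update (pid K p) j (K2 j)) ?_ ⟨j, by simp [hK2.2.1]⟩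
  rcases hbot with h | h
  · exact ⟨j, by simp [h]⟩
  · have : ∃ i : Fin n, i ≠ j := by
      have : Nontrivial (Fin n) := Fin.nontrivial_iff_two_le.2 h
      exact exists_ne j
    obtain ⟨i, hi⟩ := this
    exact ⟨i, by rw [Function.update_of_ne hi]; exact pid_ne_bot K hK hmx p i⟩

theorem cV_vp2 (hK : ∀ i, K i ≠ ⊥ ∧ K i ≠ ⊤ ∧ sig (K i) = 2)
    (hmx : ∀ i, IsLocalRing.maximalIdeal (Rs i) ≠ ⊥)
    (K2 : ∀ i, Ideal (Rs i)) (p : Fin n → Fin 3) (j : Fin n) (hj : p j = 2)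
    (hK2 : sig (K2 j) = 2 ∧ K2 j ≠ ⊤ ∧ K2 j ≠ K j)
    (hbot : K2 j ≠ ⊥ ∨ 2 ≤ n) :
    cV Φ (vp2 Φ K hK hmx K2 p j hj hK2 hbot) = p := by
  funext i
  unfold vp2
  rw [cV_vertOf]
  by_cases h : i = j
  · subst h
    rw [Function.update_self, hK2.1, hj]
  · rw [Function.update_of_ne h, sig_pid K hK]

theorem vp2_ne_vp (hK : ∀ i, K i ≠ ⊥ ∧ K i ≠ ⊤ ∧ sig (K i) = 2)
    (hmx : ∀ i, IsLocalRing.maximalIdeal (Rs i) ≠ ⊥)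
    (K2 : ∀ i, Ideal (Rs i)) (p : Fin n → Fin 3) (j : Fin n) (hj : p j = 2)
    (hK2 : sig (K2 j) = 2 ∧ K2 j ≠ ⊤ ∧ K2 j ≠ K j)
    (hbot : K2 j ≠ ⊥ ∨ 2 ≤ n) (q : Fin n → Fin 3) (hq : ∃ i, q i ≠ 0) :
    vp2 Φ K hK hmx K2 p j hj hK2 hbot ≠ vp Φ K hK hmx q hq := by
  intro h
  have hcv : p = q := by
    rw [← cV_vp2 Φ K hK hmx K2 p j hj hK2 hbot, h, cV_vp]
  subst hcv
  have := vertOf_inj Φ h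
  have hj' := congrFun this j
  rw [Function.update_self] at hj'
  apply hK2.2.2
  rw [hj']
  unfold pid
  rw [if_neg (by rw [hj]; decide), if_neg (by rw [hj]; decide)]
end WithK

theorem dist_formula
    (hprime : ∀ I : Ideal R, I.IsPrime ↔
      ∃ i, (Φ I i).IsPrime ∧ ∀ j, j ≠ i → Φ I j = ⊤)
    (K : ∀ i, Ideal (Rs i)) (hK : ∀ i, K i ≠ ⊥ ∧ K i ≠ ⊤ ∧ sig (K i) = 2)
    (hmx : ∀ i, IsLocalRing.maximalIdeal (Rs i) ≠ ⊥)
    (u v : PISVertex R) (huv : u ≠ v) :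
    (PIS R).dist u v = if (PIS R).Adj u v then 1 else 2 := by
  split_ifs with hadj
  · exact SimpleGraph.dist_eq_one_iff_adj.2 hadj
  -- find a common neighbor
  have hnadj : ¬ AdjP (cV Φ u) (cV Φ v) := fun h => hadj ((adj_iff Φ hprime u v).2 ⟨huv, h⟩)
  obtain ⟨x, hxu, hxv⟩ : ∃ x : PISVertex R, (PIS R).Adj u x ∧ (PIS R).Adj v x := by
    by_cases hex : ∃ j, cV Φ u j ≠ 0 ∧ cV Φ v j ≠ 0
    · obtain ⟨j, hj1, hj2⟩ := hex
      have hpat : ∃ i, patE1 j i ≠ 0 := ⟨j, by rw [patE1, if_pos rfl]; decide⟩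
      obtain ⟨x, hcx⟩ : ∃ x : PISVertex R, cV Φ x = patE1 j :=
        ⟨vp Φ K hK hmx (patE1 j) hpat, cV_vp Φ K hK hmx _ _⟩
      refine ⟨x, (adj_iff Φ hprime u x).2 ⟨?_, ?_⟩, (adj_iff Φ hprime v x).2 ⟨?_, ?_⟩⟩
      · intro h
        apply hnadj
        rw [h, hcx]
        exact ((adjP_patE1 (cV Φ v) j).2 hj2).symm
      · rw [hcx]; exact (adjP_patE1 (cV Φ u) j).2 hj1
      · intro h
        apply hnadj
        have : cV Φ v = patE1 j := by rw [h, hcx]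
        rw [this]
        exact (adjP_patE1 (cV Φ u) j).2 hj1
      · rw [hcx]; exact (adjP_patE1 (cV Φ v) j).2 hj2
    · push_neg at hex
      obtain ⟨j, hj⟩ := cV_ne_zero Φ u
      obtain ⟨k, hk⟩ := cV_ne_zero Φ v
      have hvj : cV Φ v j = 0 := by
        by_contra h
        exact h (hex j hj)
      have huk : cV Φ u k = 0 := by
        by_contra h
        exact hk (hex k h)
      have hjk : j ≠ k := fun h => hj (h ▸ huk)
      have hpat : ∃ i, patE2 j k i ≠ 0 := ⟨j, by rw [patE2, if_pos (Or.inl rfl)]; decide⟩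
      obtain ⟨x, hcx⟩ : ∃ x : PISVertex R, cV Φ x = patE2 j k :=
        ⟨vp Φ K hK hmx (patE2 j k) hpat, cV_vp Φ K hK hmx _ _⟩
      have hxu : x ≠ u := by
        intro h
        have h2 := congrFun (h ▸ hcx) k
        rw [patE2, if_pos (Or.inr rfl)] at h2
        rw [huk] at h2
        exact absurd h2 (by decide)
      have hxv : x ≠ v := by
        intro h
        have h2 := congrFun (h ▸ hcx) j
        rw [patE2, if_pos (Or.inl rfl)] at h2
        rw [hvj] at h2
        exact absurd h2 (by decide)
      refine ⟨x, (adj_iff Φ hprime u x).2 ⟨Ne.symm hxu, ?_⟩,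
        (adj_iff Φ hprime v x).2 ⟨Ne.symm hxv, ?_⟩⟩
      · rw [hcx]; exact adjP_patE2 _ hjk hj huk
      · rw [hcx]
        obtain ⟨l, hl1, hl0⟩ := adjP_patE2 (cV Φ v) hjk.symm hk hvj
        refine ⟨l, ?_, ?_⟩
        · rwa [show patE2 k j = patE2 j k by funext i; rw [patE2, patE2]; simp [or_comm]] at hl1
        · intro i hi
          have := hl0 i hi
          rwa [show patE2 k j = patE2 j k by funext i'; rw [patE2, patE2]; simp [or_comm]] at this
  -- dist = 2
  have hle : (PIS R).dist u v ≤ 2 := by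
    have := SimpleGraph.dist_le (SimpleGraph.Walk.cons hxu
      (SimpleGraph.Walk.cons hxv.symm SimpleGraph.Walk.nil))
    simpa using this
  have hne0 : (PIS R).dist u v ≠ 0 := by
    intro h
    rcases SimpleGraph.dist_eq_zero_iff_eq_or_not_reachable.1 h with h' | h'
    · exact huv h'
    · exact h' ⟨SimpleGraph.Walk.cons hxu (SimpleGraph.Walk.cons hxv.symm SimpleGraph.Walk.nil)⟩
  have hne1 : (PIS R).dist u v ≠ 1 := fun h => hadj (SimpleGraph.dist_eq_one_iff_adj.1 h)
  omega

theorem twin_dist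
    (hprime : ∀ I : Ideal R, I.IsPrime ↔
      ∃ i, (Φ I i).IsPrime ∧ ∀ j, j ≠ i → Φ I j = ⊤)
    (K : ∀ i, Ideal (Rs i)) (hK : ∀ i, K i ≠ ⊥ ∧ K i ≠ ⊤ ∧ sig (K i) = 2)
    (hmx : ∀ i, IsLocalRing.maximalIdeal (Rs i) ≠ ⊥)
    (u v w : PISVertex R) (hc : cV Φ u = cV Φ v) (huv : u ≠ v) (hwu : w ≠ u) (hwv : w ≠ v) :
    (PIS R).dist u w = (PIS R).dist v w := by
  rw [dist_formula Φ hprime K hK hmx u w (Ne.symm hwu),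
    dist_formula Φ hprime K hK hmx v w (Ne.symm hwv)]
  have : (PIS R).Adj u w ↔ (PIS R).Adj v w := by
    rw [adj_iff Φ hprime, adj_iff Φ hprime, hc]
    exact and_congr_left (fun _ => ⟨fun _ => Ne.symm hwv, fun _ => Ne.symm hwu⟩)
  split_ifs with h1 h2 h2
  · rfl
  · exact absurd (this.1 h1) h2
  · exact absurd (this.2 h2) h1
  · rfl
end Main


/-- If `R` is isomorphic to a product of `n` Artinian local principal ideal rings each
having at least 2 nonzero proper ideals, and either `n ≥ 2` or `n = 1` and the factor
has at least 3 nonzero proper ideals, then the metric dimension of `PIS R` equals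
`|A(R)*| - 3 ^ n + 1`. -/
theorem metricDim_PIS_artinian_local_PIR {R : Type*} [CommRing R] {n : ℕ}
    (Rs : Fin n → Type*) [∀ i, CommRing (Rs i)] [∀ i, IsArtinianRing (Rs i)]
    [∀ i, IsLocalRing (Rs i)] [∀ i, IsPrincipalIdealRing (Rs i)]
    (h2 : ∀ i, 2 ≤ {I : Ideal (Rs i) | I ≠ ⊥ ∧ I ≠ ⊤}.encard)
    (hn : 2 ≤ n ∨ (n = 1 ∧ ∀ i, 3 ≤ {I : Ideal (Rs i) | I ≠ ⊥ ∧ I ≠ ⊤}.encard))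
    (e : R ≃+* ∀ i, Rs i) :
    metricDim (PIS R) = {I : Ideal R | I ≠ ⊥ ∧ I ≠ ⊤}.encard - 3 ^ n + 1 := by
  classical
  have hn1 : 1 ≤ n := by rcases hn with h | ⟨h, _⟩ <;> omega
  set Φ : Ideal R ≃o ∀ i, Ideal (Rs i) := (idealCongr e).trans idealPiIso with hΦdef
  have hprime : ∀ I : Ideal R, I.IsPrime ↔ ∃ i, (Φ I i).IsPrime ∧ ∀ j, j ≠ i → Φ I j = ⊤ :=
    fun I => (idealCongr_isPrime_iff e).trans isPrime_iff_pi
  -- choices of σ = 2 ideals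
  choose K hK using fun i => exists_sig2_nonzero (h2 i)
  have hmx : ∀ i, IsLocalRing.maximalIdeal (Rs i) ≠ ⊥ :=
    fun i => mx_ne_bot_of ⟨K i, (hK i).1, (hK i).2.1⟩
  have hbotnetop : ∀ i, (⊥ : Ideal (Rs i)) ≠ ⊤ := by
    intro i h
    have : (1 : Rs i) ∈ (⊥ : Ideal (Rs i)) := h ▸ trivial
    simp at this
  have hK2ex : ∀ i, ∃ K2 : Ideal (Rs i), sig K2 = 2 ∧ K2 ≠ ⊤ ∧ K2 ≠ K i ∧ (K2 ≠ ⊥ ∨ 2 ≤ n) := by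
    intro i
    rcases hn with h | ⟨h1, h3⟩
    · exact ⟨⊥, sig_eq_two_iff.2 ⟨hbotnetop i, Ne.symm (hmx i)⟩, hbotnetop i,
        Ne.symm (hK i).1, Or.inr h⟩
    · obtain ⟨K', K'', hne, hK', hK''⟩ := exists_two_sig2_nonzero (h3 i)
      by_cases hc : K' = K i
      · exact ⟨K'', hK''.2.2, hK''.2.1, by rw [← hc]; exact hne.symm, Or.inl hK''.1⟩
      · exact ⟨K', hK'.2.2, hK'.2.1, hc, Or.inl hK'.1⟩
  choose K2 hK2 using hK2ex
  -- the transversal T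
  have hpnz : ∀ p : {p : Fin n → Fin 3 // p ≠ 0}, ∃ i, p.1 i ≠ 0 :=
    fun p => Function.ne_iff.1 p.2
  set f : {p : Fin n → Fin 3 // p ≠ 0} → PISVertex R :=
    fun p => vp Φ K hK hmx p.1 (hpnz p) with hfdef
  have hcf : ∀ p, cV Φ (f p) = p.1 := fun p => cV_vp Φ K hK hmx p.1 (hpnz p)
  have hfinj : Function.Injective f := fun p q h =>
    Subtype.ext (by rw [← hcf p, ← hcf q, h])
  set T : Set (PISVertex R) := Set.range f with hTdef
  -- second representatives miss T
  have hvp2T : ∀ (C : Fin n → Fin 3) (j : Fin n) (hj : C j = 2)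
      (hk2 : sig (K2 j) = 2 ∧ K2 j ≠ ⊤ ∧ K2 j ≠ K j) (hb : K2 j ≠ ⊥ ∨ 2 ≤ n),
      vp2 Φ K hK hmx K2 C j hj hk2 hb ∉ T := by
    rintro C j hj hk2 hb ⟨p, hp⟩
    exact vp2_ne_vp Φ K hK hmx K2 C j hj hk2 hb p.1 (hpnz p) hp.symm
  -- finiteness
  have hfinI : ∀ i, Finite (Ideal (Rs i)) := fun i => ideal_finite
  have hfinIR : Finite (Ideal R) := Finite.of_injective (fun I => Φ I) Φ.injective
  have hfinV : Finite (PISVertex R) := Subtype.finite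
  -- cardinalities
  set N : ℕ := Nat.card (PISVertex R) with hNdef
  have hNuniv : (Set.univ : Set (PISVertex R)).encard = (N : ℕ∞) := by
    have : Fintype (PISVertex R) := Fintype.ofFinite _
    rw [Set.encard_univ, ENat.card_eq_coe_fintype_card, hNdef, Nat.card_eq_fintype_card]
  have hpatsetcard : {p : Fin n → Fin 3 | p ≠ 0}.encard = ((3 ^ n - 1 : ℕ) : ℕ∞) := by
    have h1 : {p : Fin n → Fin 3 | p ≠ 0} = Set.univ \ {0} := by
      ext p; simp
    rw [h1, Set.encard_diff_singleton_of_mem (Set.mem_univ _), Set.encard_univ,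
      ENat.card_eq_coe_fintype_card]
    rw [show Fintype.card (Fin n → Fin 3) = 3 ^ n by simp [Fintype.card_fun]]
    push_cast [Nat.cast_sub (Nat.one_le_pow n 3 (by norm_num))]
    ring
  have hTcard : T.encard = ((3 ^ n - 1 : ℕ) : ℕ∞) := by
    rw [hTdef, ← Set.image_univ, (hfinj.injOn).encard_image, Set.encard_univ,
      ENat.card_eq_coe_fintype_card]
    congr 1
    rw [Fintype.card_subtype_compl, Fintype.card_subtype_eq]
    congr 1
    simp [Fintype.card_fun]

  -- N ≥ 3 ^ n
  have hN3 : 3 ^ n ≤ N := by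
    set j0 : Fin n := ⟨0, hn1⟩ with hj0
    have hCj : patC1 j0 j0 = 2 := by rw [patC1, if_pos rfl]
    set w2 := vp2 Φ K hK hmx K2 (patC1 j0) j0 hCj
      ⟨(hK2 j0).1, (hK2 j0).2.1, (hK2 j0).2.2.1⟩ (hK2 j0).2.2.2 with hw2
    have hw2T : w2 ∉ T := hvp2T _ _ _ _ _
    have hins : (insert w2 T).encard = ((3 ^ n - 1 : ℕ) : ℕ∞) + 1 := by
      rw [Set.encard_insert_of_notMem hw2T, hTcard]
    have hle : (insert w2 T).encard ≤ (Set.univ : Set (PISVertex R)).encard :=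
      Set.encard_le_encard (Set.subset_univ _)
    rw [hins, hNuniv] at hle
    have : ((3 ^ n - 1 : ℕ) : ℕ∞) + 1 = ((3 ^ n - 1 + 1 : ℕ) : ℕ∞) := by push_cast; rfl
    rw [this] at hle
    have := Nat.cast_le.1 hle
    omega
  -- the complement of T is a resolving set
  have hres : IsResolvingSet (PIS R) Tᶜ := by
    intro u v huv hnboth
    by_cases hu : u ∈ Tᶜ
    · refine ⟨u, hu, ?_⟩
      rw [SimpleGraph.dist_self, SimpleGraph.dist_comm,
        dist_formula Φ hprime K hK hmx u v huv]
      split_ifs <;> omega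
    · by_cases hv : v ∈ Tᶜ
      · refine ⟨v, hv, ?_⟩
        rw [SimpleGraph.dist_self, dist_formula Φ hprime K hK hmx u v huv]
        split_ifs <;> omega
      · -- both in T
        obtain ⟨p, hp⟩ : u ∈ T := Set.not_notMem.1 hu
        obtain ⟨q, hq⟩ : v ∈ T := Set.not_notMem.1 hv
        have hpq : p.1 ≠ q.1 := by
          intro h
          exact huv (by rw [← hp, ← hq]; exact congrArg f (Subtype.ext h))
        obtain ⟨C, ⟨j, hCj⟩, hxor⟩ := exists_separating_pattern hpq (hpnz p) (hpnz q)
        set w := vp2 Φ K hK hmx K2 C j hCj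
          ⟨(hK2 j).1, (hK2 j).2.1, (hK2 j).2.2.1⟩ (hK2 j).2.2.2 with hwdef
        have hwT : w ∉ T := hvp2T _ _ _ _ _
        have hcw : cV Φ w = C := cV_vp2 Φ K hK hmx K2 C j hCj _ _
        have hwu : w ≠ u := fun h => hwT (h ▸ (⟨p, hp⟩ : u ∈ T))
        have hwv : w ≠ v := fun h => hwT (h ▸ (⟨q, hq⟩ : v ∈ T))
        refine ⟨w, hwT, ?_⟩
        have hAu : (PIS R).Adj u w ↔ AdjP p.1 C := by
          rw [adj_iff Φ hprime]
          have : cV Φ u = p.1 := by rw [← hp]; exact hcf p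
          rw [this, hcw]
          exact and_iff_right (Ne.symm hwu)
        have hAv : (PIS R).Adj v w ↔ AdjP q.1 C := by
          rw [adj_iff Φ hprime]
          have : cV Φ v = q.1 := by rw [← hq]; exact hcf q
          rw [this, hcw]
          exact and_iff_right (Ne.symm hwv)
        rw [dist_formula Φ hprime K hK hmx u w (Ne.symm hwu),
          dist_formula Φ hprime K hK hmx v w (Ne.symm hwv)]
        by_cases hA : AdjP p.1 C
        · have hB : ¬ AdjP q.1 C := fun hB => hxor ⟨fun _ => hB, fun _ => hA⟩
          rw [if_pos (hAu.2 hA), if_neg (fun h => hB (hAv.1 h))]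
          omega
        · have hB : AdjP q.1 C := by
            by_contra hB
            exact hxor ⟨fun h => absurd h hA, fun h => absurd h hB⟩
          rw [if_neg (fun h => hA (hAu.1 h)), if_pos (hAv.2 hB)]
          omega
  -- encard of the complement of T
  have hTc : Tᶜ.encard = ((N - (3 ^ n - 1) : ℕ) : ℕ∞) := by
    obtain ⟨b, hb⟩ : ∃ b : ℕ, Tᶜ.encard = b :=
      ⟨_, (Set.toFinite Tᶜ).encard_eq_coe_toFinset_card⟩
    have := Set.encard_add_encard_compl T
    rw [hTcard, hb, hNuniv] at this
    have h' : 3 ^ n - 1 + b = N := by exact_mod_cast this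
    rw [hb]
    congr 1
    omega
  -- lower bound for any resolving set
  have hlb : ∀ S : Set (PISVertex R), IsResolvingSet (PIS R) S →
      ((N - (3 ^ n - 1) : ℕ) : ℕ∞) ≤ S.encard := by
    intro S hS
    have hinj : Set.InjOn (cV Φ) Sᶜ := by
      intro u hu v hv hcv
      by_contra hne
      obtain ⟨w, hwS, hd⟩ := hS u v hne (fun h => hu h.1)
      have hwu : w ≠ u := fun h => hu (h ▸ hwS)
      have hwv : w ≠ v := fun h => hv (h ▸ hwS)
      exact hd (twin_dist Φ hprime K hK hmx u v w hcv hne hwu hwv)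
    have himg : cV Φ '' Sᶜ ⊆ {p : Fin n → Fin 3 | p ≠ 0} := by
      rintro _ ⟨u, _, rfl⟩
      exact Function.ne_iff.2 (cV_ne_zero Φ u)
    have hSc : Sᶜ.encard ≤ ((3 ^ n - 1 : ℕ) : ℕ∞) := by
      rw [← hinj.encard_image]
      exact hpatsetcard ▸ Set.encard_le_encard himg
    obtain ⟨a, ha⟩ : ∃ a : ℕ, S.encard = a :=
      ⟨_, (Set.toFinite S).encard_eq_coe_toFinset_card⟩
    obtain ⟨b, hb⟩ : ∃ b : ℕ, Sᶜ.encard = b :=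
      ⟨_, (Set.toFinite Sᶜ).encard_eq_coe_toFinset_card⟩
    have hab : a + b = N := by
      have := Set.encard_add_encard_compl S
      rw [ha, hb, hNuniv] at this
      exact_mod_cast this
    have hble : b ≤ 3 ^ n - 1 := by
      rw [hb] at hSc
      exact_mod_cast hSc
    rw [ha]
    exact_mod_cast (by omega : N - (3 ^ n - 1) ≤ a)
  -- conclude
  have hdim : metricDim (PIS R) = ((N - (3 ^ n - 1) : ℕ) : ℕ∞) := by
    apply le_antisymm
    · exact le_trans (iInf_le _ ⟨Tᶜ, hres⟩) (le_of_eq hTc)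
    · exact le_iInf fun S => hlb S.1 S.2
  have hsetN : {I : Ideal R | I ≠ ⊥ ∧ I ≠ ⊤}.encard = (N : ℕ∞) := by
    rw [← ENat.card_coe_set_eq, ← Set.encard_univ]
    exact hNuniv
  rw [hdim, hsetN]
  have h1 : 1 ≤ 3 ^ n := Nat.one_le_pow _ _ (by norm_num)
  have hNN : (N - (3 ^ n - 1) : ℕ) = N - 3 ^ n + 1 := by omega
  rw [hNN]
  push_cast [Nat.cast_sub hN3]
  ring
end

section
/- Let n ≥ 2 and let R ≅ R₁ × ⋯ × Rₙ, where each Rᵢ is an Artinian local principal ideal ring having exactly 2 nonzero proper ideals. Then the metric dimension of the prime ideal sum graph PIS(R) equals 4ⁿ − 3ⁿ − 1. -/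
open scoped Classical

namespace PISAux

open SimpleGraph

theorem iso_dist_le {V W : Type*} {G : SimpleGraph V} {G' : SimpleGraph W} (φ : G ≃g G')
    (u v : V) : G'.dist (φ u) (φ v) ≤ G.dist u v := by
  by_cases hr : G.Reachable u v
  · obtain ⟨p, hp⟩ := hr.exists_walk_length_eq_dist
    calc G'.dist (φ u) (φ v) ≤ (p.map φ.toHom).length := SimpleGraph.dist_le _
    _ = G.dist u v := by rw [SimpleGraph.Walk.length_map, hp]
  · have hr' : ¬ G'.Reachable (φ u) (φ v) := fun h => hr (by simpa using h.map φ.symm.toHom)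
    rw [SimpleGraph.dist_eq_zero_of_not_reachable hr, SimpleGraph.dist_eq_zero_of_not_reachable hr']

theorem iso_dist {V W : Type*} {G : SimpleGraph V} {G' : SimpleGraph W} (φ : G ≃g G')
    (u v : V) : G'.dist (φ u) (φ v) = G.dist u v := by
  refine le_antisymm (iso_dist_le φ u v) ?_
  have := iso_dist_le φ.symm (φ u) (φ v)
  simpa using this

theorem iso_resolving {V W : Type*} {G : SimpleGraph V} {G' : SimpleGraph W} (φ : G ≃g G')
    {S : Set V} (hS : IsResolvingSet G S) : IsResolvingSet G' (φ '' S) := by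
  intro u v huv h
  obtain ⟨w, hw, hne⟩ := hS (φ.symm u) (φ.symm v)
    (fun h => huv (by simpa using congrArg φ h))
    (by
      intro hc
      exact h ⟨⟨_, hc.1, by simp⟩, ⟨_, hc.2, by simp⟩⟩)
  refine ⟨φ w, ⟨w, hw, rfl⟩, ?_⟩
  have h1 := iso_dist φ (φ.symm u) w
  have h2 := iso_dist φ (φ.symm v) w
  simp only [RelIso.apply_symm_apply] at h1 h2
  rw [h1, h2]
  exact hne

theorem metricDim_le_of_iso {V W : Type*} {G : SimpleGraph V} {G' : SimpleGraph W}
    (φ : G ≃g G') : metricDim G' ≤ metricDim G := by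
  refine le_iInf fun S => ?_
  refine iInf_le_of_le ⟨φ '' S.1, iso_resolving φ S.2⟩ ?_
  exact le_of_eq (Function.Injective.encard_image (φ.toEquiv.injective) _)

theorem metricDim_eq_of_iso {V W : Type*} {G : SimpleGraph V} {G' : SimpleGraph W}
    (φ : G ≃g G') : metricDim G = metricDim G' :=
  le_antisymm (metricDim_le_of_iso φ.symm) (metricDim_le_of_iso φ)



abbrev Pat (n : ℕ) := Fin n → Fin 4

def IsPP {n : ℕ} (f : Pat n) : Prop := ∃ k, f k = 2 ∧ ∀ j, j ≠ k → f j = 3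

abbrev MV (n : ℕ) := {f : Pat n // f ≠ (fun _ => 0) ∧ f ≠ (fun _ => 3)}

def Model (n : ℕ) : SimpleGraph (MV n) where
  Adj u v := u ≠ v ∧ IsPP (u.1 ⊔ v.1)
  symm := ⟨fun u v h => ⟨h.1.symm, by rw [sup_comm]; exact h.2⟩⟩
  loopless := ⟨fun u h => h.1 rfl⟩

variable {n : ℕ}

lemma sup_apply' (u v : Pat n) (i : Fin n) : (u ⊔ v) i = u i ⊔ v i := rfl

-- small Fin 4 facts
lemma fin4_sup_eq_two {x y : Fin 4} : x ⊔ y = 2 ↔ (x ≤ 2 ∧ y ≤ 2 ∧ (x = 2 ∨ y = 2)) := by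
  revert x y; decide

lemma fin4_sup_eq_three {x y : Fin 4} : x ⊔ y = 3 ↔ (x = 3 ∨ y = 3) := by
  revert x y; decide

lemma fin4_ne_three_le_two {x : Fin 4} (h : x ≠ 3) : x ≤ 2 := by revert x; decide

/-- common neighbor for distinct non-adjacent vertices -/
lemma common_neighbor {u v : MV n} (huv : u ≠ v) (hna : ¬ (Model n).Adj u v) :
    ∃ w, (Model n).Adj u w ∧ (Model n).Adj v w := by
  by_cases hk : ∃ k, u.1 k ≤ 2 ∧ v.1 k ≤ 2
  · obtain ⟨k, hu, hv⟩ := hk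
    -- w = P_k
    refine ⟨⟨fun j => if j = k then 2 else 3, ?_, ?_⟩, ?_, ?_⟩
    · intro h; have := congrFun h k; simp at this
    · intro h; have := congrFun h k; simp at this
    · constructor
      · intro h
        -- u = P_k; then u and v would be adjacent
        apply hna
        refine ⟨huv, ⟨k, ?_, ?_⟩⟩
        · rw [sup_apply', fin4_sup_eq_two]
          have : u.1 k = 2 := by
            have := congrArg (fun (x : MV n) => x.1 k) h; simpa using this
          exact ⟨hu, hv, Or.inl this⟩
        · intro j hj
          have : u.1 j = 3 := by
            have := congrArg (fun (x : MV n) => x.1 j) h; simpa [hj] using this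
          rw [sup_apply', fin4_sup_eq_three]; exact Or.inl this
      · refine ⟨k, ?_, ?_⟩
        · show u.1 k ⊔ (if k = k then (2:Fin 4) else 3) = 2
          rw [if_pos rfl, fin4_sup_eq_two]
          exact ⟨hu, by decide, Or.inr rfl⟩
        · intro j hj
          show u.1 j ⊔ (if j = k then (2:Fin 4) else 3) = 3
          rw [if_neg hj, fin4_sup_eq_three]; right; rfl
    · constructor
      · intro h
        apply hna
        refine ⟨huv, ⟨k, ?_, ?_⟩⟩
        · rw [sup_apply', fin4_sup_eq_two]
          have : v.1 k = 2 := by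
            have := congrArg (fun (x : MV n) => x.1 k) h; simpa using this
          exact ⟨hu, hv, Or.inr this⟩
        · intro j hj
          have : v.1 j = 3 := by
            have := congrArg (fun (x : MV n) => x.1 j) h; simpa [hj] using this
          rw [sup_apply', fin4_sup_eq_three]; exact Or.inr this
      · refine ⟨k, ?_, ?_⟩
        · show v.1 k ⊔ (if k = k then (2:Fin 4) else 3) = 2
          rw [if_pos rfl, fin4_sup_eq_two]
          exact ⟨hv, by decide, Or.inr rfl⟩
        · intro j hj
          show v.1 j ⊔ (if j = k then (2:Fin 4) else 3) = 3
          rw [if_neg hj, fin4_sup_eq_three]; right; rfl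
  · push_neg at hk
    obtain ⟨a, ha⟩ := Function.ne_iff.1 u.2.2
    obtain ⟨b, hb⟩ := Function.ne_iff.1 v.2.2
    have hua : u.1 a ≤ 2 := fin4_ne_three_le_two ha
    have hvb : v.1 b ≤ 2 := fin4_ne_three_le_two hb
    have hva : v.1 a = 3 := by
      by_contra h; exact absurd (hk a hua) (not_lt.2 (fin4_ne_three_le_two h))
    have hub : u.1 b = 3 := by
      by_contra h
      exact absurd (hk b (fin4_ne_three_le_two h)) (not_lt.2 hvb)
    have hab : a ≠ b := by intro h; rw [h] at ha hua; rw [hub] at hua; exact absurd hua (by decide)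
    refine ⟨⟨fun j => if j = a then 2 else if j = b then 2 else 3, ?_, ?_⟩, ?_, ?_⟩
    · intro h; have := congrFun h a; simp at this
    · intro h; have := congrFun h a; simp at this
    · refine ⟨?_, ⟨a, ?_, ?_⟩⟩
      · intro h; have := congrArg (fun (x : MV n) => x.1 b) h
        simp [hab.symm] at this; rw [hub] at this; exact absurd this (by decide)
      · show u.1 a ⊔ (if a = a then (2:Fin 4) else if a = b then 2 else 3) = 2
        rw [if_pos rfl, fin4_sup_eq_two]; exact ⟨hua, by decide, Or.inr rfl⟩
      · intro j hj
        show u.1 j ⊔ (if j = a then (2:Fin 4) else if j = b then 2 else 3) = 3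
        rw [if_neg hj, fin4_sup_eq_three]
        by_cases hjb : j = b
        · subst hjb; rw [if_pos rfl]; left; exact hub
        · rw [if_neg hjb]; right; rfl
    · refine ⟨?_, ⟨b, ?_, ?_⟩⟩
      · intro h; have := congrArg (fun (x : MV n) => x.1 a) h
        simp at this; rw [hva] at this; exact absurd this (by decide)
      · show v.1 b ⊔ (if b = a then (2:Fin 4) else if b = b then 2 else 3) = 2
        rw [if_neg hab.symm, if_pos rfl, fin4_sup_eq_two]
        exact ⟨hvb, by decide, Or.inr rfl⟩
      · intro j hj
        show v.1 j ⊔ (if j = a then (2:Fin 4) else if j = b then 2 else 3) = 3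
        rw [fin4_sup_eq_three]
        by_cases hja : j = a
        · subst hja; rw [if_pos rfl]; left; exact hva
        · rw [if_neg hja, if_neg hj]; right; rfl

lemma dist_formula (u v : MV n) (huv : u ≠ v) :
    (Model n).dist u v = if (Model n).Adj u v then 1 else 2 := by
  by_cases h : (Model n).Adj u v
  · simp [h, SimpleGraph.dist_eq_one_iff_adj.2 h]
  · simp only [h, if_false]
    obtain ⟨w, h1, h2⟩ := common_neighbor huv h
    have hw : (Model n).dist u v ≤ 2 := by
      have := SimpleGraph.dist_le (SimpleGraph.Walk.cons h1 (SimpleGraph.Walk.cons h2.symm SimpleGraph.Walk.nil))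
      simpa using this
    have hne0 : (Model n).dist u v ≠ 0 := by
      have hr : (Model n).Reachable u v := ⟨SimpleGraph.Walk.cons h1 (SimpleGraph.Walk.cons h2.symm SimpleGraph.Walk.nil)⟩
      intro hz
      rcases SimpleGraph.dist_eq_zero_iff_eq_or_not_reachable.1 hz with h' | h'
      · exact huv h'
      · exact h' hr
    have hne1 : (Model n).dist u v ≠ 1 := fun h1' => h (SimpleGraph.dist_eq_one_iff_adj.1 h1')
    omega

def cl : Fin 4 → Fin 3 := ![0,0,1,2]

lemma cl_lemma : ∀ x y z : Fin 4, cl x = cl y →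
    ((x ⊔ z = 2 ↔ y ⊔ z = 2) ∧ (x ⊔ z = 3 ↔ y ⊔ z = 3)) := by decide

lemma adj_congr {u v w : MV n} (h : ∀ i, cl (u.1 i) = cl (v.1 i)) :
    ((Model n).Adj u w ↔ (Model n).Adj v w) → True := fun _ => trivial

lemma isPP_congr {u v w : Pat n} (h : ∀ i, cl (u i) = cl (v i)) :
    IsPP (u ⊔ w) ↔ IsPP (v ⊔ w) := by
  constructor
  · rintro ⟨k, hk2, hk3⟩
    refine ⟨k, ?_, fun j hj => ?_⟩
    · exact ((cl_lemma _ _ _ (h k)).1).1 hk2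
    · exact ((cl_lemma _ _ _ (h j)).2).1 (hk3 j hj)
  · rintro ⟨k, hk2, hk3⟩
    refine ⟨k, ?_, fun j hj => ?_⟩
    · exact ((cl_lemma _ _ _ (h k)).1).2 hk2
    · exact ((cl_lemma _ _ _ (h j)).2).2 (hk3 j hj)

lemma adj_iff_of_cl_eq {u v w : MV n} (h : ∀ i, cl (u.1 i) = cl (v.1 i))
    (hu : w ≠ u) (hv : w ≠ v) : ((Model n).Adj u w ↔ (Model n).Adj v w) := by
  unfold Model
  simp only
  constructor
  · rintro ⟨-, hp⟩; exact ⟨hv.symm, (isPP_congr h).1 hp⟩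
  · rintro ⟨-, hp⟩; exact ⟨hu.symm, (isPP_congr h).2 hp⟩

lemma dist_eq_of_cl_eq {u v w : MV n} (h : ∀ i, cl (u.1 i) = cl (v.1 i))
    (hu : w ≠ u) (hv : w ≠ v) : (Model n).dist u w = (Model n).dist v w := by
  rw [dist_formula u w hu.symm, dist_formula v w hv.symm]
  by_cases ha : (Model n).Adj u w
  · rw [if_pos ha, if_pos ((adj_iff_of_cl_eq h hu hv).1 ha)]
  · rw [if_neg ha, if_neg (fun hb => ha ((adj_iff_of_cl_eq h hu hv).2 hb))]

def RS (n : ℕ) : Set (MV n) := {v | ∃ i, v.1 i = 0}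

lemma dist_ne_of_adj_xor {u v w : MV n} (hu : u ≠ w) (hv : v ≠ w)
    (h : (Model n).Adj u w) (h' : ¬ (Model n).Adj v w) :
    (Model n).dist u w ≠ (Model n).dist v w := by
  rw [dist_formula u w hu, dist_formula v w hv, if_pos h, if_neg h']
  decide

/-- the vertex `0` at `i`, `3` elsewhere -/
def w1 (hn : 2 ≤ n) (i : Fin n) : MV n := by
  refine ⟨fun j => if j = i then 0 else 3, ?_, ?_⟩
  · intro h
    obtain ⟨j, hj⟩ := Fintype.exists_ne_of_one_lt_card (by simp; omega) i
    have := congrFun h j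
    simp [hj] at this
  · intro h
    have := congrFun h i
    simp at this

lemma w1_mem (hn : 2 ≤ n) (i : Fin n) : w1 hn i ∈ RS n := ⟨i, by simp [w1]⟩

lemma adj_w1 (hn : 2 ≤ n) (i : Fin n) (x : MV n) (hx : x ≠ w1 hn i) :
    (Model n).Adj x (w1 hn i) ↔ x.1 i = 2 := by
  constructor
  · rintro ⟨-, k, hk2, hk3⟩
    by_cases hki : k = i
    · subst hki
      have : x.1 k ⊔ (if k = k then (0:Fin 4) else 3) = 2 := hk2
      rw [if_pos rfl] at this
      simpa using this
    · have : x.1 k ⊔ (if k = i then (0:Fin 4) else 3) = 2 := hk2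
      rw [if_neg hki] at this
      rw [fin4_sup_eq_two] at this
      exact absurd this.2.1 (by decide)
  · intro h2
    refine ⟨hx, i, ?_, fun j hj => ?_⟩
    · show x.1 i ⊔ (if i = i then (0:Fin 4) else 3) = 2
      rw [if_pos rfl, h2]; decide
    · show x.1 j ⊔ (if j = i then (0:Fin 4) else 3) = 3
      rw [if_neg hj, fin4_sup_eq_three]; right; rfl

/-- witness for case `u` low at `i`, `v` = 3 at `i` -/
lemma witness_two (hn : 2 ≤ n) {u v : MV n} (i : Fin n) (hu1 : u.1 i ≤ 1) (hv3 : v.1 i = 3) :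
    ∃ w ∈ RS n, (Model n).Adj v w ∧ ¬ (Model n).Adj u w := by
  obtain ⟨k, hk⟩ := Function.ne_iff.1 v.2.2
  have hki : k ≠ i := fun h => hk (h ▸ hv3)
  have hvk : v.1 k ≤ 2 := fin4_ne_three_le_two hk
  refine ⟨⟨fun j => if j = k then 2 else if j = i then 0 else 3, ?_, ?_⟩, ⟨i, ?_⟩, ?_, ?_⟩
  · intro h; have := congrFun h k; simp at this
  · intro h; have := congrFun h i; simp [hki.symm] at this
  · show (if i = k then (2:Fin 4) else if i = i then 0 else 3) = 0
    rw [if_neg hki.symm, if_pos rfl]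
  · refine ⟨?_, k, ?_, fun j hj => ?_⟩
    · intro h
      have := congrArg (fun (x : MV n) => x.1 i) h
      simp only [hv3] at this
      simp [hki.symm] at this
    · show v.1 k ⊔ (if k = k then (2:Fin 4) else if k = i then 0 else 3) = 2
      rw [if_pos rfl, fin4_sup_eq_two]
      exact ⟨hvk, by decide, Or.inr rfl⟩
    · show v.1 j ⊔ (if j = k then (2:Fin 4) else if j = i then 0 else 3) = 3
      rw [if_neg hj, fin4_sup_eq_three]
      by_cases hji : j = i
      · subst hji; left; exact hv3
      · rw [if_neg hji]; right; rfl
  · rintro ⟨-, m, hm2, hm3⟩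
    -- the sup at coordinate i is ≤ 1, contradiction
    have hlow : u.1 i ⊔ (if i = k then (2:Fin 4) else if i = i then 0 else 3) ≤ 1 := by
      rw [if_neg hki.symm, if_pos rfl]
      have : ∀ x : Fin 4, x ≤ 1 → x ⊔ 0 ≤ 1 := by decide
      exact this _ hu1
    by_cases hmi : m = i
    · subst hmi
      have h2 : u.1 m ⊔ (if m = k then (2:Fin 4) else if m = m then 0 else 3) = 2 := hm2
      rw [h2] at hlow
      exact absurd hlow (by decide)
    · have h3 : u.1 i ⊔ (if i = k then (2:Fin 4) else if i = i then 0 else 3) = 3 := hm3 i (Ne.symm hmi)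
      rw [h3] at hlow
      exact absurd hlow (by decide)

lemma RS_resolving (hn : 2 ≤ n) : IsResolvingSet (Model n) (RS n) := by
  intro u v huv hboth
  have hdne : ∀ x y : MV n, x ≠ y → (Model n).dist x y ≠ 0 := by
    intro x y hxy
    rw [dist_formula x y hxy]
    by_cases h : (Model n).Adj x y <;> simp [h]
  by_cases hu : u ∈ RS n
  · exact ⟨u, hu, by rw [SimpleGraph.dist_self]; exact fun h => hdne v u (Ne.symm huv) h.symm⟩
  by_cases hv : v ∈ RS n
  · exact ⟨v, hv, by rw [SimpleGraph.dist_self]; exact hdne u v huv⟩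
  -- both avoid 0
  have hu0 : ∀ i, u.1 i ≠ 0 := by simpa [RS] using hu
  have hv0 : ∀ i, v.1 i ≠ 0 := by simpa [RS] using hv
  have h1 : u.1 ≠ v.1 := fun h => huv (Subtype.ext h)
  obtain ⟨i, hi⟩ := Function.ne_iff.1 h1
  have hne_w : ∀ w : MV n, w ∈ RS n → u ≠ w ∧ v ≠ w := by
    intro w hw
    constructor
    · intro h; exact hu (h ▸ hw)
    · intro h; exact hv (h ▸ hw)
  by_cases h2 : (u.1 i = 2) ↔ (v.1 i = 2)
  · -- one is 3, the other is 1
    have key : ∀ x y : Fin 4, x ≠ y → (x = 2 ↔ y = 2) → x ≠ 0 → y ≠ 0 →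
        (x ≤ 1 ∧ y = 3) ∨ (y ≤ 1 ∧ x = 3) := by decide
    rcases key _ _ hi h2 (hu0 i) (hv0 i) with ⟨ha, hb⟩ | ⟨ha, hb⟩
    · obtain ⟨w, hw, hadj, hnadj⟩ := witness_two hn i ha hb
      obtain ⟨hwu, hwv⟩ := hne_w w hw
      exact ⟨w, hw, Ne.symm (dist_ne_of_adj_xor hwv hwu hadj hnadj)⟩
    · obtain ⟨w, hw, hadj, hnadj⟩ := witness_two hn i ha hb
      obtain ⟨hwu, hwv⟩ := hne_w w hw
      exact ⟨w, hw, dist_ne_of_adj_xor hwu hwv hadj hnadj⟩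
  · -- exactly one is 2: use w1
    set w := w1 hn i with hwdef
    have hw : w ∈ RS n := w1_mem hn i
    obtain ⟨hwu, hwv⟩ := hne_w w hw
    by_cases hu2 : u.1 i = 2
    · have hv2 : v.1 i ≠ 2 := fun h => h2 (iff_of_true hu2 h)
      have hadj : (Model n).Adj u w := (adj_w1 hn i u hwu).2 hu2
      have hnadj : ¬ (Model n).Adj v w := fun h => hv2 ((adj_w1 hn i v hwv).1 h)
      exact ⟨w, hw, dist_ne_of_adj_xor hwu hwv hadj hnadj⟩
    · have hv2 : v.1 i = 2 := by
        by_contra h; exact h2 (iff_of_false hu2 h)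
      have hadj : (Model n).Adj v w := (adj_w1 hn i v hwv).2 hv2
      have hnadj : ¬ (Model n).Adj u w := fun h => hu2 ((adj_w1 hn i u hwu).1 h)
      exact ⟨w, hw, Ne.symm (dist_ne_of_adj_xor hwv hwu hadj hnadj)⟩

def sc : Fin 3 → Fin 4 := ![1,2,3]

lemma card_pat : Fintype.card (Pat n) = 4 ^ n := by
  rw [Fintype.card_fun]; simp

noncomputable instance : Fintype (MV n) := Fintype.ofFinite _

lemma c0_ne_c3 (hn : 2 ≤ n) : (fun _ => (0:Fin 4) : Pat n) ≠ (fun _ => 3) := by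
  intro h
  have := congrFun h ⟨0, by omega⟩
  simp at this

lemma card_MV (hn : 2 ≤ n) : Fintype.card (MV n) = 4 ^ n - 2 := by
  classical
  have e1 : Fintype.card (MV n) =
      Fintype.card {f : Pat n // ¬ (f = (fun _ => 0) ∨ f = (fun _ => 3))} :=
    Fintype.card_congr (Equiv.subtypeEquivRight (fun f => (not_or).symm))
  rw [e1, Fintype.card_subtype_compl, card_pat]
  congr 1
  rw [Fintype.card_subtype_or_disjoint]
  · rw [Fintype.card_subtype_eq, Fintype.card_subtype_eq]
  · intro r h0 h3 f hf
    have h00 := h0 f hf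
    have h33 := h3 f hf
    simp only at h00 h33
    exact absurd (h00 ▸ h33 ▸ rfl : (fun _ => (0:Fin 4) : Pat n) = (fun _ => 3)) (c0_ne_c3 hn)

/-- vertices avoiding `0` are equivalent to non-top `Fin 3`-patterns -/
noncomputable def nzEquiv (hn : 2 ≤ n) :
    {v : MV n // ∀ i, v.1 i ≠ 0} ≃ {p : Fin n → Fin 3 // p ≠ fun _ => 2} where
  toFun v := ⟨fun i => cl (v.1.1 i), by
    intro h
    apply v.1.2.2
    funext i
    have := congrFun h i
    have hcl : ∀ x : Fin 4, cl x = 2 → x = 3 := by decide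
    exact hcl _ this⟩
  invFun p := ⟨⟨fun i => sc (p.1 i), by
      intro h
      have := congrFun h ⟨0, by omega⟩
      exact absurd this (by revert this; generalize p.1 ⟨0, by omega⟩ = y; revert y; decide), by
      intro h
      apply p.2
      funext i
      have := congrFun h i
      have hsc : ∀ y : Fin 3, sc y = 3 → y = 2 := by decide
      exact hsc _ this⟩, by
    intro i
    show sc (p.1 i) ≠ 0
    have : ∀ y : Fin 3, sc y ≠ 0 := by decide
    exact this _⟩
  left_inv v := by
    apply Subtype.ext; apply Subtype.ext
    funext i
    show sc (cl (v.1.1 i)) = v.1.1 i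
    have : ∀ x : Fin 4, x ≠ 0 → sc (cl x) = x := by decide
    exact this _ (v.2 i)
  right_inv p := by
    apply Subtype.ext
    funext i
    show cl (sc (p.1 i)) = p.1 i
    have : ∀ y : Fin 3, cl (sc y) = y := by decide
    exact this _

lemma card_fin3_ne : Fintype.card {p : Fin n → Fin 3 // p ≠ fun _ => 2} = 3 ^ n - 1 := by
  classical
  have e1 : Fintype.card {p : Fin n → Fin 3 // p ≠ fun _ => 2} =
      Fintype.card {p : Fin n → Fin 3 // ¬ (p = fun _ => 2)} := rfl
  rw [e1, Fintype.card_subtype_compl, Fintype.card_subtype_eq, Fintype.card_fun]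
  simp

lemma card_RSc (hn : 2 ≤ n) :
    Fintype.card {v : MV n // v ∉ RS n} = 3 ^ n - 1 := by
  classical
  have e1 : Fintype.card {v : MV n // v ∉ RS n} =
      Fintype.card {v : MV n // ∀ i, v.1 i ≠ 0} := by
    apply Fintype.card_congr
    apply Equiv.subtypeEquivRight
    intro v
    simp [RS]
  rw [e1, Fintype.card_congr (nzEquiv hn), card_fin3_ne]

lemma card_RS (hn : 2 ≤ n) :
    Fintype.card {v : MV n // v ∈ RS n} = 4 ^ n - 3 ^ n - 1 := by
  classical
  have h := Fintype.card_subtype_compl (fun v : MV n => v ∈ RS n)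
  have h2 : Fintype.card {v : MV n // v ∉ RS n} = 3 ^ n - 1 := card_RSc hn
  have h3 : Fintype.card {v : MV n // v ∈ RS n} ≤ Fintype.card (MV n) :=
    Fintype.card_subtype_le _
  have h4 := card_MV (n := n) hn
  have p1 : 3 ^ n < 4 ^ n := Nat.pow_lt_pow_left (by omega) (by omega)
  have p2 : 9 ≤ 3 ^ n := by
    calc (9:ℕ) = 3 ^ 2 := by norm_num
    _ ≤ 3 ^ n := Nat.pow_le_pow_right (by omega) hn
  omega

lemma encard_set_eq_card (s : Set (MV n)) :
    s.encard = (Fintype.card {v : MV n // v ∈ s} : ℕ∞) := by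
  classical
  rw [Set.encard_eq_coe_toFinset_card]
  congr 1
  rw [Set.toFinset_card]

lemma encard_RS (hn : 2 ≤ n) : (RS n).encard = ((4 ^ n - 3 ^ n - 1 : ℕ) : ℕ∞) := by
  rw [encard_set_eq_card, card_RS hn]

lemma lower_bound (hn : 2 ≤ n) {S : Set (MV n)} (hS : IsResolvingSet (Model n) S) :
    ((4 ^ n - 3 ^ n - 1 : ℕ) : ℕ∞) ≤ S.encard := by
  classical
  set g : MV n → (Fin n → Fin 3) := fun v i => cl (v.1 i) with hg
  have hinj : Set.InjOn g Sᶜ := by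
    intro u hu v hv hguv
    by_contra hne
    obtain ⟨w, hw, hd⟩ := hS u v hne (fun h => hu h.1)
    have hwu : w ≠ u := fun h => hu (h ▸ hw)
    have hwv : w ≠ v := fun h => hv (h ▸ hw)
    exact hd (dist_eq_of_cl_eq (fun i => congrFun hguv i) hwu hwv)
  have himg : g '' Sᶜ ⊆ {p : Fin n → Fin 3 | p ≠ fun _ => 2} := by
    rintro _ ⟨v, -, rfl⟩
    intro h
    apply v.2.2
    funext i
    have := congrFun h i
    simp only [hg] at this
    have hcl : ∀ x : Fin 4, cl x = 2 → x = 3 := by decide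
    exact hcl _ this
  have henc : {p : Fin n → Fin 3 | p ≠ fun _ => 2}.encard = ((3 ^ n - 1 : ℕ) : ℕ∞) := by
    rw [Set.encard_eq_coe_toFinset_card]
    congr 1
    rw [Set.toFinset_card]
    exact card_fin3_ne
  have h1 : Sᶜ.encard ≤ ((3 ^ n - 1 : ℕ) : ℕ∞) := by
    rw [← hinj.encard_image, ← henc]
    exact Set.encard_le_encard himg
  have h2 : S.encard + Sᶜ.encard = (Set.univ : Set (MV n)).encard :=
    Set.encard_add_encard_compl S
  have huniv : (Set.univ : Set (MV n)).encard = ((4 ^ n - 2 : ℕ) : ℕ∞) := by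
    rw [Set.encard_univ, ENat.card_eq_coe_fintype_card, card_MV hn]
  -- convert to ℕ
  have hSfin : S.Finite := Set.toFinite S
  have hScfin : Sᶜ.Finite := Set.toFinite _
  obtain ⟨a, ha⟩ : ∃ a : ℕ, S.encard = a := ⟨_, encard_set_eq_card S⟩
  obtain ⟨b, hb⟩ : ∃ b : ℕ, Sᶜ.encard = b := ⟨_, encard_set_eq_card Sᶜ⟩
  rw [ha, hb, huniv] at h2
  rw [hb] at h1
  rw [ha]
  have h2' : a + b = 4 ^ n - 2 := by exact_mod_cast h2
  have h1' : b ≤ 3 ^ n - 1 := by exact_mod_cast h1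
  have p1 : 3 ^ n < 4 ^ n := Nat.pow_lt_pow_left (by omega) (by omega)
  have p2 : 9 ≤ 3 ^ n := by
    calc (9:ℕ) = 3 ^ 2 := by norm_num
    _ ≤ 3 ^ n := Nat.pow_le_pow_right (by omega) hn
  exact_mod_cast Nat.cast_le.2 (by omega : 4 ^ n - 3 ^ n - 1 ≤ a)

theorem metricDim_model (hn : 2 ≤ n) :
    metricDim (Model n) = ((4 ^ n - 3 ^ n - 1 : ℕ) : ℕ∞) := by
  apply le_antisymm
  · exact iInf_le_of_le ⟨RS n, RS_resolving hn⟩ (le_of_eq (encard_RS hn))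
  · exact le_iInf fun S => lower_bound hn S.2



/-! ### Component structure -/

section Component
variable {A : Type*} [CommRing A] [IsArtinianRing A] [IsLocalRing A]

lemma build_iso (a m : Ideal A) (hba : ⊥ < a) (ham : a < m) (hmt : m < ⊤)
    (hclass : ∀ I : Ideal A, I = ⊥ ∨ I = a ∨ I = m ∨ I = ⊤)
    (hprime : ∀ J : Ideal A, J.IsPrime ↔ J = m) :
    ∃ c : Ideal A ≃o Fin 4, (∀ J, J.IsPrime ↔ c J = 2) ∧ c ⊥ = 0 ∧ c ⊤ = 3 := by
  set ψ : Fin 4 → Ideal A := ![⊥, a, m, ⊤] with hψdef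
  have hmono : StrictMono ψ := by
    intro i j hij
    fin_cases i <;> fin_cases j <;>
      simp_all [hψdef] <;>
      first
        | exact hba | exact ham | exact hmt
        | exact lt_trans hba ham | exact lt_trans ham hmt
        | exact lt_trans hba (lt_trans ham hmt)
        | exact absurd hij (by decide)
  have hsurj : Function.Surjective ψ := by
    intro I
    rcases hclass I with h | h | h | h
    · exact ⟨0, by simp [hψdef, h]⟩
    · exact ⟨1, by simp [hψdef, h]⟩
    · exact ⟨2, by simp [hψdef, h]⟩
    · exact ⟨3, by simp [hψdef, h]⟩
  set iso := StrictMono.orderIsoOfSurjective ψ hmono hsurj with hiso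
  refine ⟨iso.symm, fun J => ?_, ?_, ?_⟩
  · rw [hprime, OrderIso.symm_apply_eq]
    have : iso 2 = m := by
      rw [hiso]
      show ψ 2 = m
      simp [hψdef]
    rw [this]
  · rw [OrderIso.symm_apply_eq]
    have : iso 0 = ⊥ := by rw [hiso]; show ψ 0 = ⊥; simp [hψdef]
    rw [this]
  · rw [OrderIso.symm_apply_eq]
    have : iso 3 = ⊤ := by rw [hiso]; show ψ 3 = ⊤; simp [hψdef]
    rw [this]

lemma component_structure (h2 : {I : Ideal A | I ≠ ⊥ ∧ I ≠ ⊤}.encard = 2) :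
    ∃ c : Ideal A ≃o Fin 4, (∀ J : Ideal A, J.IsPrime ↔ c J = 2) ∧ c ⊥ = 0 ∧ c ⊤ = 3 := by
  set m := IsLocalRing.maximalIdeal A with hm
  have hmtop : m ≠ ⊤ := (IsLocalRing.maximalIdeal.isMaximal A).ne_top
  have hmbot : m ≠ ⊥ := by
    intro h
    have hempty : {I : Ideal A | I ≠ ⊥ ∧ I ≠ ⊤} = ∅ := by
      ext I
      simp only [Set.mem_setOf_eq, Set.mem_empty_iff_false, iff_false, not_and, not_not]
      intro hIbot
      by_contra hItop
      have hle := IsLocalRing.le_maximalIdeal hItop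
      rw [← hm, h] at hle
      exact hIbot (le_bot_iff.1 hle)
    rw [hempty] at h2
    simp at h2
  have hprime : ∀ J : Ideal A, J.IsPrime ↔ J = m := by
    intro J
    constructor
    · intro hJ
      exact IsLocalRing.eq_maximalIdeal ((IsArtinianRing.isPrime_iff_isMaximal J).1 hJ)
    · rintro rfl
      exact (IsLocalRing.maximalIdeal.isMaximal A).isPrime
  obtain ⟨x, y, hxy, hset⟩ := Set.encard_eq_two.1 h2
  have hmmem : m ∈ {I : Ideal A | I ≠ ⊥ ∧ I ≠ ⊤} := ⟨hmbot, hmtop⟩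
  have hcases : ∀ a : Ideal A, a ∈ ({x, y} : Set (Ideal A)) → a ≠ m →
      (a ≠ ⊥ ∧ a ≠ ⊤ ∧ a ≠ m ∧ ∀ I : Ideal A, I = ⊥ ∨ I = a ∨ I = m ∨ I = ⊤) := by
    intro a hamem ham
    have haset : a ∈ {I : Ideal A | I ≠ ⊥ ∧ I ≠ ⊤} := by rw [hset]; exact hamem
    refine ⟨haset.1, haset.2, ham, ?_⟩
    intro I
    by_cases hIb : I = ⊥
    · exact Or.inl hIb
    by_cases hIt : I = ⊤
    · exact Or.inr (Or.inr (Or.inr hIt))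
    have : I ∈ {I : Ideal A | I ≠ ⊥ ∧ I ≠ ⊤} := ⟨hIb, hIt⟩
    rw [hset] at this
    have hmm : m ∈ ({x, y} : Set (Ideal A)) := by rw [← hset]; exact hmmem
    rcases this with rfl | rfl
    · rcases hamem with rfl | rfl
      · exact Or.inr (Or.inl rfl)
      · rcases hmm with rfl | rfl
        · exact Or.inr (Or.inr (Or.inl rfl))
        · exact absurd rfl ham
    · rcases hamem with rfl | rfl
      · rcases hmm with rfl | rfl
        · exact absurd rfl ham
        · exact Or.inr (Or.inr (Or.inl rfl))
      · exact Or.inr (Or.inl rfl)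
  rw [hset] at hmmem
  have key : ∃ a, a ≠ ⊥ ∧ a ≠ ⊤ ∧ a ≠ m ∧ ∀ I : Ideal A, I = ⊥ ∨ I = a ∨ I = m ∨ I = ⊤ := by
    rcases hmmem with rfl | rfl
    · exact ⟨y, hcases y (Or.inr rfl) (fun h => hxy h.symm)⟩
    · exact ⟨x, hcases x (Or.inl rfl) hxy⟩
  obtain ⟨a, hab, hat, ham, hclass⟩ := key
  have haltm : a < m :=
    lt_of_le_of_ne (IsLocalRing.le_maximalIdeal hat) ham
  exact build_iso a m (bot_lt_iff_ne_bot.2 hab) haltm (lt_top_iff_ne_top.2 hmtop) hclass hprime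

end Component

/-! ### Ideals of finite products -/

section PiIdeals
variable {n : ℕ} {Rs : Fin n → Type*} [∀ i, CommRing (Rs i)]

def idealPi (J : ∀ i, Ideal (Rs i)) : Ideal (∀ i, Rs i) where
  carrier := {x | ∀ i, x i ∈ J i}
  add_mem' := fun ha hb i => (J i).add_mem (ha i) (hb i)
  zero_mem' := fun i => (J i).zero_mem
  smul_mem' := fun c x hx i => (J i).mul_mem_left (c i) (hx i)

lemma mem_idealPi {J : ∀ i, Ideal (Rs i)} {x : ∀ i, Rs i} :
    x ∈ idealPi J ↔ ∀ i, x i ∈ J i := Iff.rfl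

def comp (I : Ideal (∀ i, Rs i)) (i : Fin n) : Ideal (Rs i) :=
  I.map (Pi.evalRingHom Rs i)

lemma eval_surjective (i : Fin n) : Function.Surjective (Pi.evalRingHom Rs i) := by
  intro y
  exact ⟨Pi.single i y, Pi.single_eq_same i y⟩

lemma mem_comp_iff {I : Ideal (∀ i, Rs i)} {i : Fin n} {y : Rs i} :
    y ∈ comp I i ↔ ∃ x ∈ I, x i = y := by
  unfold comp
  rw [Ideal.mem_map_iff_of_surjective _ (eval_surjective i)]
  constructor
  · rintro ⟨x, hx, rfl⟩; exact ⟨x, hx, rfl⟩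
  · rintro ⟨x, hx, rfl⟩; exact ⟨x, hx, rfl⟩

lemma single_one_mul (i : Fin n) (x : ∀ i, Rs i) :
    Pi.single i (1 : Rs i) * x = Pi.single i (x i) := by
  funext j
  by_cases h : j = i
  · subst h; simp [Pi.single_eq_same]
  · simp [Pi.single_eq_of_ne h]

lemma single_mem_of_mem {I : Ideal (∀ i, Rs i)} {x : ∀ i, Rs i} (hx : x ∈ I) (i : Fin n) :
    Pi.single i (x i) ∈ I := by
  rw [← single_one_mul i x]
  exact I.mul_mem_left _ hx

lemma idealPi_comp (I : Ideal (∀ i, Rs i)) : idealPi (fun i => comp I i) = I := by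
  ext x
  rw [mem_idealPi]
  constructor
  · intro hx
    have hsum : x = ∑ i, Pi.single i (x i) := (Finset.univ_sum_single x).symm
    rw [hsum]
    apply Ideal.sum_mem
    intro i _
    obtain ⟨y, hy, hyx⟩ := mem_comp_iff.1 (hx i)
    rw [← hyx]
    exact single_mem_of_mem hy i
  · intro hx i
    exact Ideal.mem_map_of_mem _ hx

lemma comp_idealPi (J : ∀ i, Ideal (Rs i)) (i : Fin n) : comp (idealPi J) i = J i := by
  ext y
  rw [mem_comp_iff]
  constructor
  · rintro ⟨x, hx, rfl⟩; exact hx i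
  · intro hy
    refine ⟨Pi.single i y, ?_, Pi.single_eq_same i y⟩
    intro j
    by_cases h : j = i
    · subst h; simpa using hy
    · simp [Pi.single_eq_of_ne h]

def idealPiIso : Ideal (∀ i, Rs i) ≃o (∀ i, Ideal (Rs i)) where
  toFun I := fun i => comp I i
  invFun := idealPi
  left_inv := idealPi_comp
  right_inv := fun J => funext (comp_idealPi J)
  map_rel_iff' := by
    intro I I'
    constructor
    · intro h x hx
      rw [← idealPi_comp I']
      intro i
      exact h i (Ideal.mem_map_of_mem _ hx)
    · intro h i
      exact Ideal.map_mono h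

lemma idealPi_isPrime_iff (hn : 1 ≤ n) (J : ∀ i, Ideal (Rs i)) :
    (idealPi J).IsPrime ↔ ∃ k, (J k).IsPrime ∧ ∀ j, j ≠ k → J j = ⊤ := by
  constructor
  · intro hP
    have hne : idealPi J ≠ ⊤ := hP.ne_top
    have hk : ∃ k, J k ≠ ⊤ := by
      by_contra h
      push_neg at h
      apply hne
      rw [Ideal.eq_top_iff_one, mem_idealPi]
      intro i
      rw [h i]
      exact Submodule.mem_top
    obtain ⟨k, hk⟩ := hk
    have htop : ∀ j, j ≠ k → J j = ⊤ := by
      intro j hj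
      by_contra hjt
      have hzero : (Pi.single k (1 : Rs k)) * (Pi.single j (1 : Rs j)) ∈ idealPi J := by
        have : (Pi.single k (1 : Rs k)) * (Pi.single j (1 : Rs j)) = 0 := by
          funext l
          by_cases hl : l = k
          · subst hl; simp [Pi.single_eq_of_ne (Ne.symm hj)]
          · simp [Pi.single_eq_of_ne hl]
        rw [this]
        exact (idealPi J).zero_mem
      rcases hP.mem_or_mem hzero with h | h
      · exact hk (Ideal.eq_top_iff_one _ |>.2 (by simpa using h k))
      · exact hjt (Ideal.eq_top_iff_one _ |>.2 (by simpa using h j))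
    refine ⟨k, ⟨?_, ?_⟩, htop⟩
    · intro h
      apply hne
      rw [Ideal.eq_top_iff_one, mem_idealPi]
      intro i
      by_cases hi : i = k
      · subst hi; rw [h]; exact Submodule.mem_top
      · rw [htop i hi]; exact Submodule.mem_top
    · intro a b hab
      have hmem : (Pi.single k a) * (Pi.single k b) ∈ idealPi J := by
        rw [← Pi.single_mul]
        intro j
        by_cases hj : j = k
        · subst hj; simpa using hab
        · rw [htop j hj]; exact Submodule.mem_top
      rcases hP.mem_or_mem hmem with h | h
      · left; simpa using h k
      · right; simpa using h k
  · rintro ⟨k, hk, htop⟩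
    constructor
    · intro h
      apply hk.ne_top
      rw [Ideal.eq_top_iff_one]
      have := (Ideal.eq_top_iff_one _).1 h k
      simpa using this
    · intro x y hxy
      rcases hk.mem_or_mem (hxy k) with h | h
      · left
        intro j
        by_cases hj : j = k
        · subst hj; exact h
        · rw [htop j hj]; exact Submodule.mem_top
      · right
        intro j
        by_cases hj : j = k
        · subst hj; exact h
        · rw [htop j hj]; exact Submodule.mem_top

end PiIdeals


/-! ### Transfer along ring equivalences -/

section Transfer
variable {R S : Type*} [CommRing R] [CommRing S]

def idealCongr (e : R ≃+* S) : Ideal R ≃o Ideal S where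
  toFun I := I.comap (e.symm : S →+* R)
  invFun J := J.comap (e : R →+* S)
  left_inv I := by
    ext x
    show x ∈ Ideal.comap (e : R →+* S) (Ideal.comap (e.symm : S →+* R) I) ↔ x ∈ I
    rw [Ideal.mem_comap, Ideal.mem_comap]
    simp
  right_inv J := by
    ext x
    show x ∈ Ideal.comap (e.symm : S →+* R) (Ideal.comap (e : R →+* S) J) ↔ x ∈ J
    rw [Ideal.mem_comap, Ideal.mem_comap]
    simp
  map_rel_iff' := @fun I J => by
    show Ideal.comap (e.symm : S →+* R) I ≤ Ideal.comap (e.symm : S →+* R) J ↔ I ≤ J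
    constructor
    · intro h x hx
      have h2 : e x ∈ Ideal.comap (e.symm : S →+* R) I := by
        rw [Ideal.mem_comap]; simpa using hx
      have h3 := h h2
      rw [Ideal.mem_comap] at h3
      simpa using h3
    · intro h x hx
      rw [Ideal.mem_comap] at hx ⊢
      exact h hx

lemma idealCongr_apply (e : R ≃+* S) (I : Ideal R) :
    idealCongr e I = I.comap (e.symm : S →+* R) := rfl

lemma idealCongr_comap (e : R ≃+* S) (I : Ideal R) :
    (idealCongr e I).comap (e : R →+* S) = I := by
  rw [idealCongr_apply]
  ext x
  rw [Ideal.mem_comap, Ideal.mem_comap]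
  simp

lemma idealCongr_isPrime_iff (e : R ≃+* S) (I : Ideal R) :
    (idealCongr e I).IsPrime ↔ I.IsPrime := by
  constructor
  · intro h
    haveI := h
    have h2 := Ideal.comap_isPrime (e : R →+* S) (idealCongr e I)
    rwa [idealCongr_comap] at h2
  · intro h
    haveI := h
    exact Ideal.comap_isPrime (e.symm : S →+* R) I

lemma idealCongr_bot (e : R ≃+* S) : idealCongr e (⊥ : Ideal R) = ⊥ := by
  rw [idealCongr_apply]
  ext x
  rw [Ideal.mem_comap]
  simp [Ideal.mem_bot]

lemma idealCongr_top (e : R ≃+* S) : idealCongr e (⊤ : Ideal R) = ⊤ := by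
  rw [idealCongr_apply, Ideal.comap_top]

end Transfer

def piOrderIsoCongr {ι : Type*} {α β : ι → Type*} [∀ i, Preorder (α i)] [∀ i, Preorder (β i)]
    (f : ∀ i, α i ≃o β i) : (∀ i, α i) ≃o (∀ i, β i) where
  toEquiv := Equiv.piCongrRight fun i => (f i).toEquiv
  map_rel_iff' := @fun a b => by
    constructor
    · intro h i
      exact (f i).le_iff_le.1 (h i)
    · intro h i
      exact (f i).le_iff_le.2 (h i)

end PISAux

/-- If `R` is isomorphic to a product of `n ≥ 2` Artinian local principal ideal rings
each having exactly 2 nonzero proper ideals, then the metric dimension of `PIS R`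
equals `4 ^ n - 3 ^ n - 1`. -/
theorem metricDim_PIS_four_pow {R : Type*} [CommRing R] {n : ℕ} (hn : 2 ≤ n)
    (Rs : Fin n → Type*) [∀ i, CommRing (Rs i)] [∀ i, IsArtinianRing (Rs i)]
    [∀ i, IsLocalRing (Rs i)] [∀ i, IsPrincipalIdealRing (Rs i)]
    (h2 : ∀ i, {I : Ideal (Rs i) | I ≠ ⊥ ∧ I ≠ ⊤}.encard = 2)
    (e : R ≃+* ∀ i, Rs i) :
    metricDim (PIS R) = 4 ^ n - 3 ^ n - 1 := by
  classical
  -- component chain isomorphisms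
  have hcomp := fun i => PISAux.component_structure (h2 i)
  choose c hc using hcomp
  have hcp : ∀ i (J : Ideal (Rs i)), J.IsPrime ↔ c i J = 2 := fun i => (hc i).1
  have hcb : ∀ i, c i ⊥ = 0 := fun i => (hc i).2.1
  have hct : ∀ i, c i ⊤ = 3 := fun i => (hc i).2.2
  let Φ : Ideal R ≃o (Fin n → Fin 4) :=
    (PISAux.idealCongr e).trans (PISAux.idealPiIso.trans (PISAux.piOrderIsoCongr c))
  have hΦ : ∀ (I : Ideal R) (i : Fin n),
      Φ I i = c i (PISAux.comp (PISAux.idealCongr e I) i) := fun I i => rfl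
  -- prime characterization
  have hPrime : ∀ I : Ideal R, I.IsPrime ↔ PISAux.IsPP (Φ I) := by
    intro I
    rw [← PISAux.idealCongr_isPrime_iff e I]
    set J := PISAux.idealCongr e I with hJdef
    have hJ : J = PISAux.idealPi (fun i => PISAux.comp J i) := (PISAux.idealPi_comp J).symm
    have hiff := PISAux.idealPi_isPrime_iff (by omega) (fun i => PISAux.comp J i)
    rw [← hJ] at hiff
    rw [hiff]
    unfold PISAux.IsPP
    constructor
    · rintro ⟨k, hk, hkt⟩
      refine ⟨k, ?_, fun j hj => ?_⟩
      · rw [hΦ I k, ← hcp]; exact hk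
      · rw [hΦ I j, hkt j hj]; exact hct j
    · rintro ⟨k, hk, hkt⟩
      refine ⟨k, ?_, fun j hj => ?_⟩
      · rw [hcp k]; rw [hΦ I k] at hk; exact hk
      · have := hkt j hj
        rw [hΦ I j, ← hct j] at this
        exact (c j).injective this
  -- bot and top characterization
  have hbot : Φ ⊥ = (fun _ => 0) := by
    funext i
    rw [hΦ ⊥ i, PISAux.idealCongr_bot]
    have : PISAux.comp (⊥ : Ideal (∀ i, Rs i)) i = ⊥ := Ideal.map_bot
    rw [this, hcb i]
  have htop : Φ ⊤ = (fun _ => 3) := by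
    funext i
    rw [hΦ ⊤ i, PISAux.idealCongr_top]
    have : PISAux.comp (⊤ : Ideal (∀ i, Rs i)) i = ⊤ := Ideal.map_top _
    rw [this, hct i]
  have hbot' : ∀ I : Ideal R, I = ⊥ ↔ Φ I = (fun _ => 0) := by
    intro I
    rw [← hbot]
    exact ⟨fun h => h ▸ rfl, fun h => Φ.injective h⟩
  have htop' : ∀ I : Ideal R, I = ⊤ ↔ Φ I = (fun _ => 3) := by
    intro I
    rw [← htop]
    exact ⟨fun h => h ▸ rfl, fun h => Φ.injective h⟩
  -- graph isomorphism
  let ν : PISVertex R ≃ PISAux.MV n := Equiv.subtypeEquiv Φ.toEquiv (by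
    intro I
    constructor
    · rintro ⟨hb, ht⟩
      exact ⟨fun h => hb ((hbot' I).2 h), fun h => ht ((htop' I).2 h)⟩
    · rintro ⟨hb, ht⟩
      exact ⟨fun h => hb ((hbot' I).1 h), fun h => ht ((htop' I).1 h)⟩)
  let γ : PIS R ≃g PISAux.Model n := by
    refine ⟨ν, @fun u v => ?_⟩
    show ((ν u ≠ ν v) ∧ PISAux.IsPP ((ν u).1 ⊔ (ν v).1)) ↔ ((u ≠ v) ∧ (u.1 + v.1).IsPrime)
    have h1 : (ν u ≠ ν v) ↔ (u ≠ v) := (Equiv.injective ν).ne_iff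
    have h2 : PISAux.IsPP ((ν u).1 ⊔ (ν v).1) ↔ (u.1 + v.1).IsPrime := by
      rw [Ideal.add_eq_sup, hPrime]
      have hsup : Φ (u.1 ⊔ v.1) = Φ u.1 ⊔ Φ v.1 := OrderIso.map_sup Φ u.1 v.1
      rw [hsup]
      rfl
    exact and_congr h1 h2
  rw [PISAux.metricDim_eq_of_iso γ, PISAux.metricDim_model hn]
  rw [ENat.coe_sub, ENat.coe_sub, Nat.cast_pow, Nat.cast_pow, Nat.cast_one,
    Nat.cast_ofNat, Nat.cast_ofNat]
end

section
/- The metric dimension of the prime ideal sum graph PIS(ℤ/4ℤ × ℤ/2ℤ) equals 2. -/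
open scoped Classical

namespace PISaux
abbrev R : Type := ZMod 4 × ZMod 2

def IA : Ideal R := Ideal.span {((0:ZMod 4),(1:ZMod 2))}
def IB : Ideal R := Ideal.span {((2:ZMod 4),(0:ZMod 2))}
def IC : Ideal R := Ideal.span {((2:ZMod 4),(1:ZMod 2))}
def ID : Ideal R := Ideal.span {((1:ZMod 4),(0:ZMod 2))}

lemma memA (x : R) : x ∈ IA ↔ x = (0,0) ∨ x = (0,1) := by
  rw [IA, Ideal.mem_span_singleton']
  exact (by decide : ∀ x : R, (∃ a : R, a * ((0:ZMod 4),(1:ZMod 2)) = x) ↔ (x = (0,0) ∨ x = (0,1))) x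

lemma memB (x : R) : x ∈ IB ↔ x = (0,0) ∨ x = (2,0) := by
  rw [IB, Ideal.mem_span_singleton']
  exact (by decide : ∀ x : R, (∃ a : R, a * ((2:ZMod 4),(0:ZMod 2)) = x) ↔ (x = (0,0) ∨ x = (2,0))) x

lemma memC (x : R) : x ∈ IC ↔ x = (0,0) ∨ x = (0,1) ∨ x = (2,0) ∨ x = (2,1) := by
  rw [IC, Ideal.mem_span_singleton']
  exact (by decide : ∀ x : R, (∃ a : R, a * ((2:ZMod 4),(1:ZMod 2)) = x) ↔ (x = (0,0) ∨ x = (0,1) ∨ x = (2,0) ∨ x = (2,1))) x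

lemma memD (x : R) : x ∈ ID ↔ x = (0,0) ∨ x = (1,0) ∨ x = (2,0) ∨ x = (3,0) := by
  rw [ID, Ideal.mem_span_singleton']
  exact (by decide : ∀ x : R, (∃ a : R, a * ((1:ZMod 4),(0:ZMod 2)) = x) ↔ (x = (0,0) ∨ x = (1,0) ∨ x = (2,0) ∨ x = (3,0))) x

lemma cases8 (x : R) : x = (0,0) ∨ x = (0,1) ∨ x = (1,0) ∨ x = (1,1) ∨ x = (2,0) ∨ x = (2,1) ∨ x = (3,0) ∨ x = (3,1) := by
  revert x; decide

lemma classify (I : Ideal R) (h0 : I ≠ ⊥) (h1 : I ≠ ⊤) :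
    I = IA ∨ I = IB ∨ I = IC ∨ I = ID := by
  have hu1 : ((1,1):R) ∉ I := fun hu =>
    h1 (I.eq_top_of_isUnit_mem hu (IsUnit.of_mul_eq_one ((1,1):R) (by decide)))
  have hu3 : ((3,1):R) ∉ I := fun hu =>
    h1 (I.eq_top_of_isUnit_mem hu (IsUnit.of_mul_eq_one ((3,1):R) (by decide)))
  by_cases hD : ((1,0):R) ∈ I ∨ ((3,0):R) ∈ I
  · -- I = ID
    have h10 : ((1,0):R) ∈ I := by
      rcases hD with h | h
      · exact h
      · have := I.mul_mem_left ((3,0):R) h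
        rwa [show ((3,0):R)*(3,0) = (1,0) from by decide] at this
    have h30 : ((3,0):R) ∈ I := by
      have := I.mul_mem_left ((3,0):R) h10
      rwa [show ((3,0):R)*(1,0) = (3,0) from by decide] at this
    have h20 : ((2,0):R) ∈ I := by
      have := I.mul_mem_left ((2,0):R) h10
      rwa [show ((2,0):R)*(1,0) = (2,0) from by decide] at this
    right; right; right
    ext x; rw [memD]
    constructor
    · intro hx
      rcases cases8 x with rfl|rfl|rfl|rfl|rfl|rfl|rfl|rfl <;> try tauto
      · have h' : ((1,1):R) ∈ I := by
          have := I.add_mem hx h10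
          rwa [show ((0,1):R)+(1,0) = (1,1) from by decide] at this
        exact absurd h' hu1
      · have h' : ((1,1):R) ∈ I := by
          have := I.add_mem hx h30
          rwa [show ((2,1):R)+(3,0) = (1,1) from by decide] at this
        exact absurd h' hu1
    · rintro (rfl|rfl|rfl|rfl)
      · exact I.zero_mem
      · exact h10
      · exact h20
      · exact h30
  · push_neg at hD
    obtain ⟨hn10, hn30⟩ := hD
    by_cases hC : ((2,1):R) ∈ I ∨ (((0,1):R) ∈ I ∧ ((2,0):R) ∈ I)
    · -- I = IC
      have h21 : ((2,1):R) ∈ I := by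
        rcases hC with h | ⟨ha, hb⟩
        · exact h
        · have := I.add_mem ha hb
          rwa [show ((0,1):R)+(2,0) = (2,1) from by decide] at this
      have h01 : ((0,1):R) ∈ I := by
        have := I.mul_mem_left ((2,1):R) h21
        rwa [show ((2,1):R)*(2,1) = (0,1) from by decide] at this
      have h20 : ((2,0):R) ∈ I := by
        have := I.mul_mem_left ((1,0):R) h21
        rwa [show ((1,0):R)*(2,1) = (2,0) from by decide] at this
      right; right; left
      ext x; rw [memC]
      constructor
      · intro hx
        rcases cases8 x with rfl|rfl|rfl|rfl|rfl|rfl|rfl|rfl <;> tauto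
      · rintro (rfl|rfl|rfl|rfl)
        · exact I.zero_mem
        · exact h01
        · exact h20
        · exact h21
    · push_neg at hC
      have hn21 : ((2,1):R) ∉ I := hC.1
      obtain ⟨x, hx, hxne⟩ := Submodule.exists_mem_ne_zero_of_ne_bot h0
      have hzero : ((0,0):R) = 0 := rfl
      rcases cases8 x with rfl|rfl|rfl|rfl|rfl|rfl|rfl|rfl
      · exact absurd rfl hxne
      · -- x = (0,1) : I = IA
        left
        ext y; rw [memA]
        constructor
        · intro hy
          have h20' : ((2,0):R) ∉ I := hC.2 hx
          rcases cases8 y with rfl|rfl|rfl|rfl|rfl|rfl|rfl|rfl <;> tauto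
        · rintro (rfl|rfl)
          · exact I.zero_mem
          · exact hx
      · exact absurd hx hn10
      · exact absurd hx hu1
      · -- x = (2,0) : I = IB
        right; left
        ext y; rw [memB]
        constructor
        · intro hy
          have h01' : ((0,1):R) ∉ I := fun h01 => hC.2 h01 hx
          rcases cases8 y with rfl|rfl|rfl|rfl|rfl|rfl|rfl|rfl <;> tauto
        · rintro (rfl|rfl)
          · exact I.zero_mem
          · exact hx
      · exact absurd hx hn21
      · exact absurd hx hn30
      · exact absurd hx hu3



lemma memsupAB : ((2,1):R) ∈ IA ⊔ IB := by
  have := Submodule.add_mem_sup (S := IA) (T := IB)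
    ((memA (0,1)).2 (by tauto)) ((memB (2,0)).2 (by tauto))
  rwa [show ((0,1):R)+(2,0) = (2,1) from by decide] at this

lemma sumAB : IA ⊔ IB = IC := by
  apply le_antisymm
  · apply sup_le
    · rw [IA]; exact (Ideal.span_singleton_le_iff_mem _).2 ((memC _).2 (by tauto))
    · rw [IB]; exact (Ideal.span_singleton_le_iff_mem _).2 ((memC _).2 (by tauto))
  · rw [IC]; exact (Ideal.span_singleton_le_iff_mem _).2 memsupAB

lemma sumAC : IA ⊔ IC = IC := by
  apply sup_eq_right.2
  rw [IA]; exact (Ideal.span_singleton_le_iff_mem _).2 ((memC _).2 (by tauto))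

lemma sumBC : IB ⊔ IC = IC := by
  apply sup_eq_right.2
  rw [IB]; exact (Ideal.span_singleton_le_iff_mem _).2 ((memC _).2 (by tauto))

lemma sumBD : IB ⊔ ID = ID := by
  apply sup_eq_right.2
  rw [IB]; exact (Ideal.span_singleton_le_iff_mem _).2 ((memD _).2 (by tauto))

lemma sumAD : IA ⊔ ID = ⊤ := by
  rw [Ideal.eq_top_iff_one]
  have := Submodule.add_mem_sup (S := IA) (T := ID)
    ((memA (0,1)).2 (by tauto)) ((memD (1,0)).2 (by tauto))
  rwa [show ((0,1):R)+(1,0) = 1 from by decide] at this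

lemma sumCD : IC ⊔ ID = ⊤ := by
  rw [Ideal.eq_top_iff_one]
  have := Submodule.add_mem_sup (S := IC) (T := ID)
    ((memC (2,1)).2 (by tauto)) ((memD (3,0)).2 (by tauto))
  rwa [show ((2,1):R)+(3,0) = 1 from by decide] at this

lemma primeC : IC.IsPrime := by
  rw [Ideal.isPrime_iff]
  constructor
  · intro h
    have := (memC 1).1 (h ▸ Submodule.mem_top)
    revert this; decide
  · intro x y hxy
    rw [memC] at hxy
    rw [memC, memC]
    exact (by decide : ∀ x y : R,
      (x*y = (0,0) ∨ x*y = (0,1) ∨ x*y = (2,0) ∨ x*y = (2,1)) →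
      ((x = (0,0) ∨ x = (0,1) ∨ x = (2,0) ∨ x = (2,1)) ∨
       (y = (0,0) ∨ y = (0,1) ∨ y = (2,0) ∨ y = (2,1)))) x y hxy

lemma primeD : ID.IsPrime := by
  rw [Ideal.isPrime_iff]
  constructor
  · intro h
    have := (memD 1).1 (h ▸ Submodule.mem_top)
    revert this; decide
  · intro x y hxy
    rw [memD] at hxy
    rw [memD, memD]
    exact (by decide : ∀ x y : R,
      (x*y = (0,0) ∨ x*y = (1,0) ∨ x*y = (2,0) ∨ x*y = (3,0)) →
      ((x = (0,0) ∨ x = (1,0) ∨ x = (2,0) ∨ x = (3,0)) ∨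
       (y = (0,0) ∨ y = (1,0) ∨ y = (2,0) ∨ y = (3,0)))) x y hxy

lemma neAbot : IA ≠ ⊥ := by
  intro h
  have := (memA (0,1)).2 (by tauto)
  rw [h] at this
  have := (Submodule.mem_bot R).1 this
  revert this; decide

lemma neBbot : IB ≠ ⊥ := by
  intro h
  have := (memB (2,0)).2 (by tauto)
  rw [h] at this
  have := (Submodule.mem_bot R).1 this
  revert this; decide

lemma neCbot : IC ≠ ⊥ := by
  intro h
  have := (memC (2,1)).2 (by tauto)
  rw [h] at this
  have := (Submodule.mem_bot R).1 this
  revert this; decide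

lemma neDbot : ID ≠ ⊥ := by
  intro h
  have := (memD (1,0)).2 (by tauto)
  rw [h] at this
  have := (Submodule.mem_bot R).1 this
  revert this; decide

lemma neAtop : IA ≠ ⊤ := by
  intro h
  have := (memA 1).1 (h ▸ Submodule.mem_top)
  revert this; decide

lemma neBtop : IB ≠ ⊤ := by
  intro h
  have := (memB 1).1 (h ▸ Submodule.mem_top)
  revert this; decide

lemma neCtop : IC ≠ ⊤ := primeC.ne_top

lemma neDtop : ID ≠ ⊤ := primeD.ne_top

lemma neIAB : IA ≠ IB := by
  intro h
  have := (memB (0,1)).1 (h ▸ (memA (0,1)).2 (by tauto))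
  revert this; decide

lemma neIAC : IA ≠ IC := by
  intro h
  have := (memA (2,0)).1 (h.symm ▸ (memC (2,0)).2 (by tauto))
  revert this; decide

lemma neIAD : IA ≠ ID := by
  intro h
  have := (memD (0,1)).1 (h ▸ (memA (0,1)).2 (by tauto))
  revert this; decide

lemma neIBC : IB ≠ IC := by
  intro h
  have := (memB (0,1)).1 (h.symm ▸ (memC (0,1)).2 (by tauto))
  revert this; decide

lemma neIBD : IB ≠ ID := by
  intro h
  have := (memB (1,0)).1 (h.symm ▸ (memD (1,0)).2 (by tauto))
  revert this; decide

lemma neICD : IC ≠ ID := by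
  intro h
  have := (memD (0,1)).1 (h ▸ (memC (0,1)).2 (by tauto))
  revert this; decide

def vA : PISVertex R := ⟨IA, neAbot, neAtop⟩
def vB : PISVertex R := ⟨IB, neBbot, neBtop⟩
def vC : PISVertex R := ⟨IC, neCbot, neCtop⟩
def vD : PISVertex R := ⟨ID, neDbot, neDtop⟩

lemma vertex_cases (u : PISVertex R) : u = vA ∨ u = vB ∨ u = vC ∨ u = vD := by
  rcases classify u.1 u.2.1 u.2.2 with h | h | h | h
  · exact Or.inl (Subtype.ext h)
  · exact Or.inr (Or.inl (Subtype.ext h))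
  · exact Or.inr (Or.inr (Or.inl (Subtype.ext h)))
  · exact Or.inr (Or.inr (Or.inr (Subtype.ext h)))

lemma vne {I J : PISVertex R} (h : I.1 ≠ J.1) : I ≠ J := fun e => h (congrArg Subtype.val e)

lemma adjAB : (PIS R).Adj vA vB :=
  show vA ≠ vB ∧ (vA.1 + vB.1).IsPrime from ⟨vne neIAB, by rw [show vA.1 + vB.1 = IA ⊔ IB from Submodule.add_eq_sup _ _, sumAB]; exact primeC⟩

lemma adjAC : (PIS R).Adj vA vC :=
  show vA ≠ vC ∧ (vA.1 + vC.1).IsPrime from ⟨vne neIAC, by rw [show vA.1 + vC.1 = IA ⊔ IC from Submodule.add_eq_sup _ _, sumAC]; exact primeC⟩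

lemma adjBC : (PIS R).Adj vB vC :=
  show vB ≠ vC ∧ (vB.1 + vC.1).IsPrime from ⟨vne neIBC, by rw [show vB.1 + vC.1 = IB ⊔ IC from Submodule.add_eq_sup _ _, sumBC]; exact primeC⟩

lemma adjBD : (PIS R).Adj vB vD :=
  show vB ≠ vD ∧ (vB.1 + vD.1).IsPrime from ⟨vne neIBD, by rw [show vB.1 + vD.1 = IB ⊔ ID from Submodule.add_eq_sup _ _, sumBD]; exact primeD⟩

lemma nonadjAD : ¬ (PIS R).Adj vA vD := by
  intro h
  have := (show vA ≠ vD ∧ (vA.1 + vD.1).IsPrime from h).2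
  rw [show vA.1 + vD.1 = IA ⊔ ID from Submodule.add_eq_sup _ _, sumAD] at this
  exact this.ne_top rfl

lemma nonadjCD : ¬ (PIS R).Adj vC vD := by
  intro h
  have := (show vC ≠ vD ∧ (vC.1 + vD.1).IsPrime from h).2
  rw [show vC.1 + vD.1 = IC ⊔ ID from Submodule.add_eq_sup _ _, sumCD] at this
  exact this.ne_top rfl

lemma dAB : (PIS R).dist vA vB = 1 := SimpleGraph.dist_eq_one_iff_adj.2 adjAB
lemma dBA : (PIS R).dist vB vA = 1 := SimpleGraph.dist_eq_one_iff_adj.2 adjAB.symm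
lemma dAC : (PIS R).dist vA vC = 1 := SimpleGraph.dist_eq_one_iff_adj.2 adjAC
lemma dCA : (PIS R).dist vC vA = 1 := SimpleGraph.dist_eq_one_iff_adj.2 adjAC.symm
lemma dBC : (PIS R).dist vB vC = 1 := SimpleGraph.dist_eq_one_iff_adj.2 adjBC
lemma dCB : (PIS R).dist vC vB = 1 := SimpleGraph.dist_eq_one_iff_adj.2 adjBC.symm
lemma dBD : (PIS R).dist vB vD = 1 := SimpleGraph.dist_eq_one_iff_adj.2 adjBD

lemma dist_eq_two {u v b : PISVertex R} (h1 : (PIS R).Adj u b) (h2 : (PIS R).Adj b v)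
    (hne : u ≠ v) (hnadj : ¬ (PIS R).Adj u v) : (PIS R).dist u v = 2 := by
  have hle : (PIS R).dist u v ≤ 2 := by
    simpa using SimpleGraph.dist_le (SimpleGraph.Walk.cons h1 (SimpleGraph.Walk.cons h2 SimpleGraph.Walk.nil))
  have hpos : 0 < (PIS R).dist u v := SimpleGraph.Reachable.pos_dist_of_ne
    ⟨SimpleGraph.Walk.cons h1 (SimpleGraph.Walk.cons h2 SimpleGraph.Walk.nil)⟩ hne
  have hne1 : (PIS R).dist u v ≠ 1 := fun h => hnadj (SimpleGraph.dist_eq_one_iff_adj.1 h)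
  omega

lemma dAD : (PIS R).dist vA vD = 2 := dist_eq_two adjAB adjBD (vne neIAD) nonadjAD
lemma dCD : (PIS R).dist vC vD = 2 := dist_eq_two adjBC.symm adjBD (vne neICD) nonadjCD

lemma resolv : IsResolvingSet (PIS R) {vA, vD} := by
  intro u v hne hnot
  rcases vertex_cases u with rfl | rfl | rfl | rfl <;>
    rcases vertex_cases v with rfl | rfl | rfl | rfl
  · exact absurd rfl hne
  · exact ⟨vA, Or.inl rfl, by rw [SimpleGraph.dist_self, dBA]; omega⟩
  · exact ⟨vA, Or.inl rfl, by rw [SimpleGraph.dist_self, dCA]; omega⟩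
  · exact absurd ⟨Or.inl rfl, Or.inr rfl⟩ hnot
  · exact ⟨vA, Or.inl rfl, by rw [SimpleGraph.dist_self, dBA]; omega⟩
  · exact absurd rfl hne
  · exact ⟨vD, Or.inr rfl, by rw [dBD, dCD]; omega⟩
  · exact ⟨vD, Or.inr rfl, by rw [dBD, SimpleGraph.dist_self]; omega⟩
  · exact ⟨vA, Or.inl rfl, by rw [SimpleGraph.dist_self, dCA]; omega⟩
  · exact ⟨vD, Or.inr rfl, by rw [dBD, dCD]; omega⟩
  · exact absurd rfl hne
  · exact ⟨vD, Or.inr rfl, by rw [dCD, SimpleGraph.dist_self]; omega⟩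
  · exact absurd ⟨Or.inr rfl, Or.inl rfl⟩ hnot
  · exact ⟨vD, Or.inr rfl, by rw [dBD, SimpleGraph.dist_self]; omega⟩
  · exact ⟨vD, Or.inr rfl, by rw [dCD, SimpleGraph.dist_self]; omega⟩
  · exact absurd rfl hne

end PISaux

/-- The metric dimension of `PIS (ℤ/4ℤ × ℤ/2ℤ)` equals 2. -/
theorem metricDim_PIS_Z4_Z2 : metricDim (PIS (ZMod 4 × ZMod 2)) = 2 := by
  open PISaux in
  apply le_antisymm
  · have h := iInf_le (fun S : {S : Set (PISVertex R) // IsResolvingSet (PIS R) S} =>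
      (S : Set (PISVertex R)).encard) ⟨{vA, vD}, resolv⟩
    rw [Set.encard_pair (vne neIAD)] at h
    exact h
  · refine le_iInf fun ⟨S, hS⟩ => ?_
    show 2 ≤ S.encard
    by_contra hlt
    push_neg at hlt
    have hle1 : S.encard ≤ 1 := (by simpa using hlt)
    rcases Set.encard_le_one_iff_eq.1 hle1 with rfl | ⟨w, rfl⟩
    · obtain ⟨w, hw, -⟩ := hS vA vB (vne neIAB) (by simp)
      exact hw
    · rcases vertex_cases w with rfl | rfl | rfl | rfl
      · obtain ⟨w', hw', hd⟩ := hS vB vC (vne neIBC)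
          (fun h => vne neIAB (h.1.symm))
        rw [Set.mem_singleton_iff.1 hw'] at hd
        rw [dBA, dCA] at hd
        exact hd rfl
      · obtain ⟨w', hw', hd⟩ := hS vA vC (vne neIAC)
          (fun h => vne neIAB h.1)
        rw [Set.mem_singleton_iff.1 hw'] at hd
        rw [dAB, dCB] at hd
        exact hd rfl
      · obtain ⟨w', hw', hd⟩ := hS vA vB (vne neIAB)
          (fun h => vne neIAC h.1)
        rw [Set.mem_singleton_iff.1 hw'] at hd
        rw [dAC, dBC] at hd
        exact hd rfl
      · obtain ⟨w', hw', hd⟩ := hS vA vC (vne neIAC)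
          (fun h => vne neIAD h.1)
        rw [Set.mem_singleton_iff.1 hw'] at hd
        rw [dAD, dCD] at hd
        exact hd rfl
end
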